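/- arXiv:2312.16618 — 2 statements merged into one kernel-verified Lean document; each statement's English description precedes it below -/
import Mathlib

section
/- Let G be a cofinitary group, r ∈ 2^ω, T ∈ I_i(G)^+, t ∈ T, and (s,E) a condition of Z_G(r). Then there exist a condition (s',E) of Z_G(r) with (s',E) ≤ (s,E), an element t' ∈ T with t ⊆ t', and k ∈ dom(t') \ dom(t) such that t'(k) = s'(k). -/
noncomputable section

/-- Permutations of the natural numbers (elements of `S_∞`). -/
abbrev Perm' := Equiv.Perm ℕ

/-- A letter of a word over `G ∪ {x, x⁻¹}`: either a group element (of `S_∞`),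
or `Sum.inr true` standing for `x`, or `Sum.inr false` standing for `x⁻¹`. -/
abbrev Letter := Perm' ⊕ Bool

/-- A word is a list of letters, written left to right
(the leftmost letter is applied last). -/
abbrev Word := List Letter

/-- A subgroup of `S_∞` is cofinitary if every non-identity element
has only finitely many fixed points. -/
def Cofinitary (G : Subgroup Perm') : Prop :=
  ∀ g ∈ G, g ≠ 1 → {n : ℕ | g n = n}.Finite

/-- A set of pairs is a partial injection (functional and injective). -/
def PartInj (s : Set (ℕ × ℕ)) : Prop :=
  (∀ ⦃a b c⦄, (a, b) ∈ s → (a, c) ∈ s → b = c) ∧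
  (∀ ⦃a b c⦄, (a, c) ∈ s → (b, c) ∈ s → a = b)

/-- Domain of a partial injection given as a set of pairs. -/
def pdom (s : Set (ℕ × ℕ)) : Set ℕ := Prod.fst '' s

/-- Range of a partial injection given as a set of pairs. -/
def pran (s : Set (ℕ × ℕ)) : Set ℕ := Prod.snd '' s

/-- The relation given by substituting the partial injection `s` for `x`
(and `s⁻¹` for `x⁻¹`) in a single letter. -/
def letterRel (s : Set (ℕ × ℕ)) : Letter → ℕ → ℕ → Prop
  | Sum.inl g => fun a b => g a = b
  | Sum.inr true => fun a b => (a, b) ∈ s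
  | Sum.inr false => fun a b => (b, a) ∈ s

/-- The relation `w[s]`: evaluation of a word at the partial injection `s`,
composing the letter relations (rightmost letter applied first). -/
def wordRel (s : Set (ℕ × ℕ)) : Word → ℕ → ℕ → Prop
  | [] => fun a b => a = b
  | l :: w => fun a b => ∃ c, wordRel s w a c ∧ letterRel s l c b

/-- `fix(w[s])`, the set of fixed points of the partial injection `w[s]`. -/
def wordFix (s : Set (ℕ × ℕ)) (w : Word) : Set ℕ := {n | wordRel s w n n}

/-- The word `x^k` for an integer `k` (for `k < 0`, `|k|` copies of `x⁻¹`). -/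
def xpow (k : ℤ) : Word :=
  if 0 ≤ k then List.replicate k.toNat (Sum.inr true : Letter)
  else List.replicate (-k).toNat (Sum.inr false : Letter)

/-- The block `g x^k` as a word. -/
def blockWord (p : Perm' × ℤ) : Word := Sum.inl p.1 :: xpow p.2

/-- `w` is a nice word (member of `W*_G`): `w = x^{k₀}` with `k₀ > 0`, or
`w = g_l x^{k_l} ⋯ g₁ x^{k₁} g₀ x^{k₀}` with `k₀ > 0`, all `k_i ≠ 0` and all
`g_i ∈ G \ {id}`. -/
def IsNice (G : Subgroup Perm') (w : Word) : Prop :=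
  (∃ k : ℕ, 0 < k ∧ w = xpow (k : ℤ)) ∨
  (∃ bs : List (Perm' × ℤ), bs ≠ [] ∧
    (∀ p ∈ bs, p.1 ∈ G ∧ p.1 ≠ 1 ∧ p.2 ≠ 0) ∧
    (∃ p, bs.getLast? = some p ∧ 0 < p.2) ∧
    w = (bs.map blockWord).flatten)

/-- The number of occurrences of `x` or `x⁻¹` in a word. -/
def xOccurrences (w : Word) : ℕ := w.countP (fun l => l.isRight)

/-- `w ∈ W¹_G`: a nice word with exactly one occurrence of `x` or `x⁻¹`. -/
def IsNiceOne (G : Subgroup Perm') (w : Word) : Prop :=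
  IsNice G w ∧ xOccurrences w = 1

/-- `(s, E)` is a condition of Zhang's forcing `Z_G`: `s` is a finite partial
injection and `E` a finite set of nice words. -/
def ZCond (G : Subgroup Perm') (s : Set (ℕ × ℕ)) (E : Set Word) : Prop :=
  s.Finite ∧ PartInj s ∧ E.Finite ∧ ∀ w ∈ E, IsNice G w

/-- `(t, F) ≤ (s, E)` in Zhang's forcing: `s ⊆ t`, `E ⊆ F`, and
`fix(w[t]) = fix(w[s])` for every `w ∈ E`. -/
def ZLe (t : Set (ℕ × ℕ)) (F : Set Word) (s : Set (ℕ × ℕ)) (E : Set Word) : Prop :=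
  s ⊆ t ∧ E ⊆ F ∧ ∀ w ∈ E, wordFix t w = wordFix s w

/-- An injective tree: a nonempty set of finite sequences closed under initial
segments, all of whose elements are injective sequences. -/
def IsInjTree (T : Set (List ℕ)) : Prop :=
  T.Nonempty ∧ (∀ t ∈ T, ∀ s : List ℕ, s <+: t → s ∈ T) ∧ ∀ t ∈ T, t.Nodup

/-- `T ∈ I_i(P)⁺`: an injective tree such that for every `s ∈ T` and every
finite `P₀ ⊆ P` there are `t ∈ T` extending `s` and `k ∈ dom(t) \ dom(s)` with
`t(k) ≠ f(k)` for all `f ∈ P₀`. -/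
def TreePos (P : Set Perm') (T : Set (List ℕ)) : Prop :=
  IsInjTree T ∧
  ∀ s ∈ T, ∀ P₀ ⊆ P, P₀.Finite →
    ∃ t ∈ T, s <+: t ∧ ∃ k, s.length ≤ k ∧ k < t.length ∧
      ∀ f ∈ P₀, t.getD k 0 ≠ f k

/-- A set `O` is closed under a relation `R` and its inverse. -/
def RelClosed (R : ℕ → ℕ → Prop) (O : Set ℕ) : Prop :=
  ∀ a b, R a b → (a ∈ O ↔ b ∈ O)

/-- The orbit of `n` under the (partial injective) relation `R`: the smallest
set containing `n` closed under applications of `R` and `R⁻¹`. -/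
def relOrbit (R : ℕ → ℕ → Prop) (n : ℕ) : Set ℕ :=
  ⋂₀ {O : Set ℕ | n ∈ O ∧ RelClosed R O}

/-- The set of all orbits of the relation `R`. -/
def relOrbits (R : ℕ → ℕ → Prop) : Set (Set ℕ) := {O | ∃ n, O = relOrbit R n}

/-- Domain of a relation. -/
def relDom (R : ℕ → ℕ → Prop) : Set ℕ := {a | ∃ b, R a b}

/-- Range of a relation. -/
def relRan (R : ℕ → ℕ → Prop) : Set ℕ := {b | ∃ a, R a b}

/-- The set of closed orbits of `R`: those orbits contained in `dom ∩ ran`. -/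
def relClosedOrbits (R : ℕ → ℕ → Prop) : Set (Set ℕ) :=
  {O ∈ relOrbits R | O ⊆ relDom R ∩ relRan R}

/-- The relation of a partial injection given as a set of pairs. -/
def sRel (s : Set (ℕ × ℕ)) : ℕ → ℕ → Prop := fun a b => (a, b) ∈ s

/-- The relation (graph) of a permutation of `ℕ`. -/
def permRel (f : Perm') : ℕ → ℕ → Prop := fun a b => f a = b

/-- A partial injection `s` is nice: every closed orbit has its minimum below
the minimum of the complement of the union of all closed orbits. -/
def NiceInj (s : Set (ℕ × ℕ)) : Prop :=
  ∀ O ∈ relClosedOrbits (sRel s),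
    sInf O < sInf {n : ℕ | n ∉ ⋃₀ relClosedOrbits (sRel s)}

/-- The position of a closed orbit `O` of `s` in the well-order of closed
orbits by their minima. -/
def orbitIndex (s : Set (ℕ × ℕ)) (O : Set ℕ) : ℕ :=
  {P ∈ relClosedOrbits (sRel s) | sInf P < sInf O}.ncard

/-- `s` codes `r`, i.e. `o_s ⊆ r`: the `n`-th closed orbit (in the well-order
by minima) has cardinality congruent to `r(n)` mod 2. -/
def CodesReal (s : Set (ℕ × ℕ)) (r : ℕ → Fin 2) : Prop :=
  ∀ O ∈ relClosedOrbits (sRel s), O.ncard % 2 = (r (orbitIndex s O) : ℕ)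

/-- `(s, E)` is a condition of `Z_G(r)`. -/
def ZrCond (G : Subgroup Perm') (r : ℕ → Fin 2)
    (s : Set (ℕ × ℕ)) (E : Set Word) : Prop :=
  ZCond G s E ∧ NiceInj s ∧ CodesReal s r

/-- The `n`-th prime. -/
def pPrime (n : ℕ) : ℕ := Nat.nth Nat.Prime n

/-- The orbit-coding function `o†`: `o†(n)` is the number of closed orbits of
`R` of cardinality `p_n`, modulo 2. -/
def odag (R : ℕ → ℕ → Prop) (n : ℕ) : ℕ :=
  {O ∈ relClosedOrbits R | O.ncard = pPrime n}.ncard % 2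

/-- `v^k`: the word `v` concatenated `k` times. -/
def wpow (v : Word) (k : ℕ) : Word := (List.replicate k v).flatten

/-- `w ∈ W†_G`: a nice word that is indecomposable, i.e. not of the form `v^k`
for a nice word `v` and `k > 1`. -/
def Indecomposable (G : Subgroup Perm') (w : Word) : Prop :=
  IsNice G w ∧ ¬∃ v : Word, IsNice G v ∧ ∃ k : ℕ, 1 < k ∧ w = wpow v k

/-- The inverse of a letter. -/
def letterInv : Letter → Letter
  | Sum.inl g => Sum.inl g⁻¹
  | Sum.inr b => Sum.inr (!b)

/-- The inverse of a word. -/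
def wordInv (w : Word) : Word := (w.map letterInv).reverse

/-- `E` is closed under cyclic permutations and inverses thereof within `W*_G`. -/
def CyclClosed (G : Subgroup Perm') (E : Set Word) : Prop :=
  ∀ w ∈ E, ∀ w₀ w₁ : Word, w = w₀ ++ w₁ →
    (IsNice G (w₁ ++ w₀) → w₁ ++ w₀ ∈ E) ∧
    (IsNice G (wordInv (w₁ ++ w₀)) → wordInv (w₁ ++ w₀) ∈ E)

/-- `(s, E)` is a condition of `Z†_G(r)`: a Zhang condition such that `E` is
closed under cyclic permutations and inverses thereof in `W*_G`, and whenever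
`w = v^k ∈ E` with `v ∈ W†_G` then `v^l ∈ E` for all `0 < l ≤ k` and `o†_{v[s]}`
codes `r` up to `n` for every `n` with `p_n ≤ k`. -/
def ZdagCond (G : Subgroup Perm') (r : ℕ → Fin 2)
    (s : Set (ℕ × ℕ)) (E : Set Word) : Prop :=
  ZCond G s E ∧ CyclClosed G E ∧
  ∀ w ∈ E, ∀ v : Word, ∀ k : ℕ, Indecomposable G v → w = wpow v k →
    (∀ l : ℕ, 0 < l → l ≤ k → wpow v l ∈ E) ∧
    (∀ n : ℕ, pPrime n ≤ k → ∀ i ≤ n, odag (wordRel s v) i = (r i : ℕ))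

/-- Substituting the permutation `f` for `x` in a letter. -/
def letterPerm (f : Perm') : Letter → Perm'
  | Sum.inl g => g
  | Sum.inr true => f
  | Sum.inr false => f⁻¹

/-- `w[f]`: evaluation of a word at the permutation `f`. -/
def wordPerm (f : Perm') (w : Word) : Perm' := (w.map (letterPerm f)).prod

/-- Two functions are eventually different. -/
def EvDiff (f g : ℕ → ℕ) : Prop := {k : ℕ | f k = g k}.Finite

/-- A set of permutations is an eventually different family. -/
def EDFamily (P : Set Perm') : Prop :=
  ∀ f ∈ P, ∀ g ∈ P, f ≠ g → EvDiff f g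


namespace ZhangAux

open List

lemma mem_pdom {s : Set (ℕ × ℕ)} {a b : ℕ} (h : (a,b) ∈ s) : a ∈ pdom s := ⟨(a,b), h, rfl⟩
lemma mem_pran {s : Set (ℕ × ℕ)} {a b : ℕ} (h : (a,b) ∈ s) : b ∈ pran s := ⟨(a,b), h, rfl⟩

lemma letterRel_mono {s t : Set (ℕ×ℕ)} (hst : s ⊆ t) (l : Letter) {a b : ℕ} :
    letterRel s l a b → letterRel t l a b := by
  cases l with
  | inl g => exact id
  | inr v => cases v <;> exact fun h => hst h

lemma wordRel_mono {s t : Set (ℕ×ℕ)} (hst : s ⊆ t) (w : Word) :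
    ∀ a b, wordRel s w a b → wordRel t w a b := by
  induction w with
  | nil => intro a b h; exact h
  | cons l w ih =>
    rintro a b ⟨c, h1, h2⟩
    exact ⟨c, ih a c h1, letterRel_mono hst l h2⟩

lemma wordRel_append (s : Set (ℕ×ℕ)) (u v : Word) :
    ∀ a b, wordRel s (u ++ v) a b ↔ ∃ c, wordRel s v a c ∧ wordRel s u c b := by
  induction u with
  | nil =>
    intro a b
    constructor
    · intro h; exact ⟨b, h, rfl⟩
    · rintro ⟨c, h1, (h2 : c = b)⟩; exact h2 ▸ h1
  | cons l u ih =>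
    intro a b
    constructor
    · rintro ⟨c, h1, h2⟩
      rcases (ih a c).1 h1 with ⟨d, hd1, hd2⟩
      exact ⟨d, hd1, c, hd2, h2⟩
    · rintro ⟨c, h1, d, h2, h3⟩
      exact ⟨d, (ih a d).2 ⟨c, h1, h2⟩, h3⟩

lemma rep_true_dom {s : Set (ℕ×ℕ)} :
    ∀ n a b, wordRel s (List.replicate (n+1) (Sum.inr true : Letter)) a b →
      a ∈ pdom s ∧ b ∈ pran s := by
  intro n
  induction n with
  | zero =>
    rintro a b ⟨c, (hc : a = c), (h : (c,b) ∈ s)⟩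
    exact ⟨hc ▸ mem_pdom h, mem_pran h⟩
  | succ n ih =>
    rintro a b ⟨c, h1, (h2 : (c,b) ∈ s)⟩
    exact ⟨(ih a c h1).1, mem_pran h2⟩

lemma rep_false_dom {s : Set (ℕ×ℕ)} :
    ∀ n a b, wordRel s (List.replicate (n+1) (Sum.inr false : Letter)) a b →
      a ∈ pran s ∧ b ∈ pdom s := by
  intro n
  induction n with
  | zero =>
    rintro a b ⟨c, (hc : a = c), (h : (b,c) ∈ s)⟩
    exact ⟨hc ▸ mem_pran h, mem_pdom h⟩
  | succ n ih =>
    rintro a b ⟨c, h1, (h2 : (b,c) ∈ s)⟩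
    exact ⟨(ih a c h1).1, mem_pdom h2⟩

section NewPair

variable {s : Set (ℕ × ℕ)} {k m : ℕ}
  (hk : k ∉ pdom s ∪ pran s) (hm : m ∉ pdom s ∪ pran s) (hkm : k ≠ m)

include hk hm hkm

lemma rep_true_new :
    ∀ n a b, wordRel (insert (k,m) s) (List.replicate n (Sum.inr true : Letter)) a b →
      wordRel s (List.replicate n (Sum.inr true : Letter)) a b ∨ (n = 1 ∧ a = k ∧ b = m) := by
  intro n
  induction n with
  | zero => intro a b h; exact Or.inl h
  | succ n ih =>
    rintro a b ⟨c, h1, (h2 : (c,b) ∈ insert (k,m) s)⟩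
    rcases ih a c h1 with hold | ⟨hn1, ha, hc⟩
    · rcases h2 with h2 | h2
      · -- (c,b) = (k,m)
        have hck : c = k := congrArg Prod.fst h2
        have hbm : b = m := congrArg Prod.snd h2
        match n, hold with
        | 0, (h : a = c) => exact Or.inr ⟨rfl, h.trans hck, hbm⟩
        | (n+1), hold =>
          exact absurd (Or.inr (rep_true_dom n a c hold).2) (hck ▸ hk)
      · exact Or.inl ⟨c, hold, h2⟩
    · -- a = k, c = m, n = 1
      subst hc
      rcases h2 with h2 | h2
      · exact absurd (congrArg Prod.fst h2).symm hkm
      · exact absurd (Or.inl (mem_pdom h2)) hm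

lemma rep_false_new :
    ∀ n a b, wordRel (insert (k,m) s) (List.replicate n (Sum.inr false : Letter)) a b →
      wordRel s (List.replicate n (Sum.inr false : Letter)) a b ∨ (n = 1 ∧ a = m ∧ b = k) := by
  intro n
  induction n with
  | zero => intro a b h; exact Or.inl h
  | succ n ih =>
    rintro a b ⟨c, h1, (h2 : (b,c) ∈ insert (k,m) s)⟩
    rcases ih a c h1 with hold | ⟨hn1, ha, hc⟩
    · rcases h2 with h2 | h2
      · have hbk : b = k := congrArg Prod.fst h2
        have hcm : c = m := congrArg Prod.snd h2
        match n, hold with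
        | 0, (h : a = c) => exact Or.inr ⟨rfl, h.trans hcm, hbk⟩
        | (n+1), hold =>
          exact absurd (Or.inl (rep_false_dom n a c hold).2) (hcm ▸ hm)
      · exact Or.inl ⟨c, hold, h2⟩
    · -- a = m, c = k, n = 1
      subst hc
      rcases h2 with h2 | h2
      · exact absurd (congrArg Prod.snd h2) hkm
      · exact absurd (Or.inr (mem_pran h2)) hk

end NewPair

end ZhangAux
namespace ZhangAux

open List

lemma xpow_pos_eq {e : ℤ} (he : 0 < e) :
    xpow e = List.replicate e.toNat (Sum.inr true : Letter) := by
  simp [xpow, he.le]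

lemma xpow_neg_eq {e : ℤ} (he : e < 0) :
    xpow e = List.replicate (-e).toNat (Sum.inr false : Letter) := by
  simp [xpow, not_le.mpr he]

lemma xpow_old_start {s : Set (ℕ×ℕ)} {e : ℤ} (he : e ≠ 0) {a b : ℕ}
    (h : wordRel s (xpow e) a b) : a ∈ pdom s ∪ pran s := by
  rcases he.lt_or_gt with hlt | hlt
  · rw [xpow_neg_eq hlt] at h
    obtain ⟨n, hn⟩ : ∃ n, (-e).toNat = n + 1 :=
      Nat.exists_eq_succ_of_ne_zero (by omega)
    rw [hn] at h
    exact Or.inr (rep_false_dom n a b h).1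
  · rw [xpow_pos_eq hlt] at h
    obtain ⟨n, hn⟩ : ∃ n, e.toNat = n + 1 :=
      Nat.exists_eq_succ_of_ne_zero (by omega)
    rw [hn] at h
    exact Or.inl (rep_true_dom n a b h).1

lemma blockOld_start {s : Set (ℕ×ℕ)} {p : Perm' × ℤ} (hp : 0 < p.2) {a b : ℕ}
    (h : wordRel s (blockWord p) a b) : a ∈ pdom s := by
  obtain ⟨c, hc, -⟩ := h
  rw [xpow_pos_eq hp] at hc
  obtain ⟨n, hn⟩ : ∃ n, p.2.toNat = n + 1 := Nat.exists_eq_succ_of_ne_zero (by omega)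
  rw [hn] at hc
  exact (rep_true_dom n a c hc).1

lemma blocks_start {s : Set (ℕ×ℕ)} :
    ∀ bs : List (Perm' × ℤ), bs ≠ [] → (∀ p, bs.getLast? = some p → 0 < p.2) →
      ∀ a c, wordRel s ((bs.map blockWord).flatten) a c → a ∈ pdom s := by
  intro bs
  induction bs with
  | nil => intro h; exact absurd rfl h
  | cons p rest ih =>
    intro _ hlast a c h
    simp only [map_cons, flatten_cons] at h
    rcases (wordRel_append s (blockWord p) _ a c).1 h with ⟨c₁, h₁, h₂⟩
    rcases rest with _ | ⟨q, tl⟩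
    · simp only [map_nil, flatten_nil] at h₁
      have hac : a = c₁ := h₁
      exact hac ▸ blockOld_start (hlast p rfl) h₂
    · exact ih (by simp) (fun p' hp' => hlast p' ((List.getLast?_cons_cons).trans hp')) a c₁ h₁

section NewPair

variable {s : Set (ℕ × ℕ)} {k m : ℕ}
  (hk : k ∉ pdom s ∪ pran s) (hm : m ∉ pdom s ∪ pran s) (hkm : k ≠ m)

include hk hm hkm

lemma block_new {p : Perm' × ℤ} (hp : p.2 ≠ 0) {a b : ℕ}
    (h : wordRel (insert (k,m) s) (blockWord p) a b) :
    wordRel s (blockWord p) a b ∨ (a = k ∧ b = p.1 m) ∨ (a = m ∧ b = p.1 k) := by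
  obtain ⟨c, hc, (hgb : p.1 c = b)⟩ := h
  rcases hp.lt_or_gt with hlt | hlt
  · rw [xpow_neg_eq hlt] at hc
    rcases rep_false_new hk hm hkm _ a c hc with hold | ⟨-, ha, hc'⟩
    · exact Or.inl ⟨c, by rw [xpow_neg_eq hlt]; exact hold, hgb⟩
    · exact Or.inr (Or.inr ⟨ha, by rw [← hgb, hc']⟩)
  · rw [xpow_pos_eq hlt] at hc
    rcases rep_true_new hk hm hkm _ a c hc with hold | ⟨-, ha, hc'⟩
    · exact Or.inl ⟨c, by rw [xpow_pos_eq hlt]; exact hold, hgb⟩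
    · exact Or.inr (Or.inl ⟨ha, by rw [← hgb, hc']⟩)

lemma main_blocks :
    ∀ bs : List (Perm' × ℤ),
      (∀ p ∈ bs, p.2 ≠ 0 ∧
        (p.1 k ∉ pdom s ∪ pran s ∧ p.1 k ≠ k ∧ p.1 k ≠ m) ∧
        (p.1 m ∉ pdom s ∪ pran s ∧ p.1 m ≠ k ∧ p.1 m ≠ m)) →
      (∀ p, bs.getLast? = some p → 0 < p.2) →
      ∀ a b, wordRel (insert (k,m) s) ((bs.map blockWord).flatten) a b →
        wordRel s ((bs.map blockWord).flatten) a b ∨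
        ((b ∉ pdom s ∪ pran s ∧ b ≠ k ∧ b ≠ m) ∧ (a ∈ pdom s ∨ a = k ∨ a = m)) := by
  intro bs
  induction bs with
  | nil => intro _ _ a b h; exact Or.inl h
  | cons p rest ih =>
    intro hbs hlast a b h
    simp only [map_cons, flatten_cons] at h ⊢
    rcases (wordRel_append _ (blockWord p) _ a b).1 h with ⟨c, hrest, hblk⟩
    have hlast' : ∀ q, rest.getLast? = some q → 0 < q.2 := by
      rcases rest with _ | ⟨q, tl⟩
      · intro q hq; simp at hq
      · intro q hq; exact hlast q ((List.getLast?_cons_cons).trans hq)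
    have hbsrest : ∀ q ∈ rest, q.2 ≠ 0 ∧ _ ∧ _ := fun q hq => hbs q (List.mem_cons_of_mem p hq)
    rcases ih hbsrest hlast' a c hrest with hclean | ⟨⟨hc1, hc2, hc3⟩, -⟩
    · -- clean remainder
      have hp := hbs p List.mem_cons_self
      rcases block_new hk hm hkm hp.1 hblk with hold | ⟨hak, hbm⟩ | ⟨ham, hbk⟩
      · exact Or.inl ((wordRel_append s (blockWord p) _ a b).2 ⟨c, hclean, hold⟩)
      · -- c = k, b = p.1 m
        refine Or.inr ⟨hbm ▸ hp.2.2, ?_⟩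
        rcases rest with _ | ⟨q, tl⟩
        · have : a = c := hclean
          exact Or.inr (Or.inl (this.trans hak))
        · exact Or.inl (blocks_start _ (by simp) hlast' a c hclean)
      · -- c = m, b = p.1 k
        refine Or.inr ⟨hbk ▸ hp.2.1, ?_⟩
        rcases rest with _ | ⟨q, tl⟩
        · have : a = c := hclean
          exact Or.inr (Or.inr (this.trans ham))
        · exact Or.inl (blocks_start _ (by simp) hlast' a c hclean)
    · -- tainted remainder: the next block cannot be applied
      exfalso
      have hp := hbs p List.mem_cons_self
      rcases block_new hk hm hkm hp.1 hblk with hold | ⟨hak, -⟩ | ⟨ham, -⟩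
      · obtain ⟨d, hd, -⟩ := hold
        exact hc1 (xpow_old_start hp.1 hd)
      · exact hc2 hak
      · exact hc3 ham

end NewPair

end ZhangAux
namespace ZhangAux

open List

lemma mem_xpow {l : Letter} {e : ℤ} (h : l ∈ xpow e) :
    l = Sum.inr true ∨ l = Sum.inr false := by
  unfold xpow at h
  split at h
  · exact Or.inl (List.eq_of_mem_replicate h)
  · exact Or.inr (List.eq_of_mem_replicate h)

lemma letters_in_G {G : Subgroup Perm'} {w : Word} (hw : IsNice G w) {g : Perm'}
    (hg : Sum.inl g ∈ w) : g ∈ G ∧ g ≠ 1 := by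
  rcases hw with ⟨k₀, -, rfl⟩ | ⟨bs, -, hmem, -, rfl⟩
  · rcases mem_xpow hg with h | h <;> exact absurd h (by simp)
  · rcases List.mem_flatten.1 hg with ⟨u, hu, hgu⟩
    rcases List.mem_map.1 hu with ⟨p, hp, rfl⟩
    rcases List.mem_cons.1 hgu with h | h
    · obtain rfl : g = p.1 := by injection h
      exact ⟨(hmem p hp).1, (hmem p hp).2.1⟩
    · rcases mem_xpow h with h | h <;> exact absurd h (by simp)

section NewPair

variable {s : Set (ℕ × ℕ)} {k m : ℕ}
  (hk : k ∉ pdom s ∪ pran s) (hm : m ∉ pdom s ∪ pran s) (hkm : k ≠ m)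

include hk hm hkm

lemma wordFix_insert {G : Subgroup Perm'} {w : Word} (hw : IsNice G w)
    (hl : ∀ g : Perm', Sum.inl g ∈ w →
      (g k ∉ pdom s ∪ pran s ∧ g k ≠ k ∧ g k ≠ m) ∧
      (g m ∉ pdom s ∪ pran s ∧ g m ≠ k ∧ g m ≠ m)) :
    wordFix (insert (k,m) s) w = wordFix s w := by
  ext n
  constructor
  · intro h
    rcases hw with ⟨k₀, hk₀, rfl⟩ | ⟨bs, hne, hmem, ⟨q, hq, hqpos⟩, rfl⟩
    · have hpos : (0:ℤ) < (k₀:ℤ) := by exact_mod_cast hk₀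
      rw [wordFix, Set.mem_setOf_eq, xpow_pos_eq hpos] at h
      rcases rep_true_new hk hm hkm _ n n h with hold | ⟨-, h1, h2⟩
      · rw [wordFix, Set.mem_setOf_eq, xpow_pos_eq hpos]
        exact hold
      · exact absurd (h1 ▸ h2.symm ▸ rfl : k = m) hkm
    · have hconds : ∀ p ∈ bs, p.2 ≠ 0 ∧
          (p.1 k ∉ pdom s ∪ pran s ∧ p.1 k ≠ k ∧ p.1 k ≠ m) ∧
          (p.1 m ∉ pdom s ∪ pran s ∧ p.1 m ≠ k ∧ p.1 m ≠ m) := by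
        intro p hp
        have hmemw : Sum.inl p.1 ∈ (bs.map blockWord).flatten :=
          List.mem_flatten.2 ⟨blockWord p, List.mem_map_of_mem hp,
            List.mem_cons_self⟩
        exact ⟨(hmem p hp).2.2, (hl p.1 hmemw).1, (hl p.1 hmemw).2⟩
      have hlast : ∀ p, bs.getLast? = some p → 0 < p.2 := by
        intro p hp
        rw [hq] at hp
        injection hp with hp
        exact hp ▸ hqpos
      rcases main_blocks hk hm hkm bs hconds hlast n n h with hclean | ⟨⟨h1, h2, h3⟩, ha⟩
      · exact hclean
      · rcases ha with ha | ha | ha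
        · exact absurd (Or.inl ha) h1
        · exact absurd ha h2
        · exact absurd ha h3
  · exact fun h => wordRel_mono (Set.subset_insert _ _) w n n h

end NewPair

end ZhangAux
namespace ZhangAux

lemma pdom_mem {s : Set (ℕ×ℕ)} {a : ℕ} (h : a ∈ pdom s) : ∃ b, (a,b) ∈ s := by
  rcases h with ⟨⟨a', b⟩, h, rfl⟩; exact ⟨b, h⟩

lemma pran_mem {s : Set (ℕ×ℕ)} {b : ℕ} (h : b ∈ pran s) : ∃ a, (a,b) ∈ s := by
  rcases h with ⟨⟨a, b'⟩, h, rfl⟩; exact ⟨a, h⟩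

lemma mem_relOrbit_self (R : ℕ → ℕ → Prop) (n : ℕ) : n ∈ relOrbit R n :=
  Set.mem_sInter.2 fun _ hO => hO.1

lemma relOrbit_subset {R : ℕ → ℕ → Prop} {n : ℕ} {O : Set ℕ} (h1 : n ∈ O)
    (h2 : RelClosed R O) : relOrbit R n ⊆ O :=
  Set.sInter_subset_of_mem ⟨h1, h2⟩

lemma relClosed_relOrbit (R : ℕ → ℕ → Prop) (n : ℕ) : RelClosed R (relOrbit R n) := by
  intro a b hab
  simp only [relOrbit, Set.mem_sInter]
  exact ⟨fun h O hO => (hO.2 a b hab).1 (h O hO), fun h O hO => (hO.2 a b hab).2 (h O hO)⟩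

section NewPair

variable {s : Set (ℕ × ℕ)} {k m : ℕ}
  (hk : k ∉ pdom s ∪ pran s) (hm : m ∉ pdom s ∪ pran s) (hkm : k ≠ m)

lemma sRel_insert {a b : ℕ} :
    sRel (insert (k,m) s) a b ↔ (a = k ∧ b = m) ∨ sRel s a b := by
  simp [sRel, Set.mem_insert_iff, Prod.ext_iff]

include hk hm

lemma notmem_orbit {n : ℕ} (hn1 : n ≠ k) (hn2 : n ≠ m) :
    k ∉ relOrbit (sRel s) n ∧ m ∉ relOrbit (sRel s) n := by
  have hsub : relOrbit (sRel s) n ⊆ {x | x ≠ k ∧ x ≠ m} := by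
    refine relOrbit_subset ⟨hn1, hn2⟩ ?_
    intro a b hab
    have ha : a ∈ pdom s := mem_pdom hab
    have hb : b ∈ pran s := mem_pran hab
    refine iff_of_true ⟨?_, ?_⟩ ⟨?_, ?_⟩ <;> rintro rfl
    · exact hk (Or.inl ha)
    · exact hm (Or.inl ha)
    · exact hk (Or.inr hb)
    · exact hm (Or.inr hb)
  exact ⟨fun h => (hsub h).1 rfl, fun h => (hsub h).2 rfl⟩

include hkm

lemma relOrbit_insert_eq {n : ℕ} (hn1 : n ≠ k) (hn2 : n ≠ m) :
    relOrbit (sRel (insert (k,m) s)) n = relOrbit (sRel s) n := by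
  apply subset_antisymm
  · refine relOrbit_subset (mem_relOrbit_self _ n) ?_
    intro a b hab
    rcases (sRel_insert (s := s)).1 hab with ⟨rfl, rfl⟩ | hab
    · exact iff_of_false (notmem_orbit hk hm hn1 hn2).1 (notmem_orbit hk hm hn1 hn2).2
    · exact relClosed_relOrbit (sRel s) n a b hab
  · refine relOrbit_subset (mem_relOrbit_self _ n) ?_
    intro a b hab
    exact relClosed_relOrbit _ n a b ((sRel_insert (s := s)).2 (Or.inr hab))

omit hk hm hkm

lemma relOrbit_isolated {n : ℕ} (hn : n ∉ pdom s ∪ pran s) : relOrbit (sRel s) n = {n} := by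
  apply subset_antisymm
  · refine relOrbit_subset rfl ?_
    intro a b hab
    refine iff_of_false ?_ ?_ <;> rintro rfl
    · exact hn (Or.inl (mem_pdom hab))
    · exact hn (Or.inr (mem_pran hab))
  · exact Set.singleton_subset_iff.2 (mem_relOrbit_self _ n)

lemma k_mem_orbit_m : k ∈ relOrbit (sRel (insert (k,m) s)) m :=
  Set.mem_sInter.2 fun _ hO => (hO.2 k m ((sRel_insert (s := s)).2 (Or.inl ⟨rfl, rfl⟩))).2 hO.1

include hk hm hkm

lemma closedOrbits_insert :
    relClosedOrbits (sRel (insert (k,m) s)) = relClosedOrbits (sRel s) := by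
  ext O
  simp only [relClosedOrbits, Set.mem_setOf_eq, relOrbits]
  constructor
  · rintro ⟨⟨n, rfl⟩, hsub⟩
    by_cases hnk : n = k ∨ n = m
    · exfalso
      have hkO : k ∈ relOrbit (sRel (insert (k,m) s)) n := by
        rcases hnk with rfl | rfl
        · exact mem_relOrbit_self _ n
        · exact k_mem_orbit_m
      obtain ⟨a, hab⟩ := (hsub hkO).2
      rcases (sRel_insert (s := s)).1 hab with ⟨-, h2⟩ | hab
      · exact hkm h2
      · exact hk (Or.inr (mem_pran hab))
    · push_neg at hnk
      obtain ⟨hn1, hn2⟩ := hnk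
      rw [relOrbit_insert_eq hk hm hkm hn1 hn2] at hsub ⊢
      refine ⟨⟨n, rfl⟩, ?_⟩
      intro c hc
      have hck : c ≠ k := fun h => (notmem_orbit hk hm hn1 hn2).1 (h ▸ hc)
      have hcm : c ≠ m := fun h => (notmem_orbit hk hm hn1 hn2).2 (h ▸ hc)
      obtain ⟨⟨b, hb⟩, ⟨a, ha⟩⟩ := hsub hc
      constructor
      · rcases (sRel_insert (s := s)).1 hb with ⟨h1, -⟩ | hb
        · exact absurd h1 hck
        · exact ⟨b, hb⟩
      · rcases (sRel_insert (s := s)).1 ha with ⟨-, h2⟩ | ha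
        · exact absurd h2 hcm
        · exact ⟨a, ha⟩
  · rintro ⟨⟨n, rfl⟩, hsub⟩
    have hn1 : n ≠ k := by
      rintro rfl
      rw [relOrbit_isolated hk] at hsub
      obtain ⟨b, hb⟩ := (hsub rfl).1
      exact hk (Or.inl (mem_pdom hb))
    have hn2 : n ≠ m := by
      rintro rfl
      rw [relOrbit_isolated hm] at hsub
      obtain ⟨b, hb⟩ := (hsub rfl).1
      exact hm (Or.inl (mem_pdom hb))
    refine ⟨⟨n, (relOrbit_insert_eq hk hm hkm hn1 hn2).symm⟩, ?_⟩
    intro c hc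
    obtain ⟨⟨b, hb⟩, ⟨a, ha⟩⟩ := hsub hc
    exact ⟨⟨b, (sRel_insert (s := s)).2 (Or.inr hb)⟩,
           ⟨a, (sRel_insert (s := s)).2 (Or.inr ha)⟩⟩

lemma niceInj_insert (hN : NiceInj s) : NiceInj (insert (k,m) s) := by
  unfold NiceInj
  rw [closedOrbits_insert hk hm hkm]
  exact hN

lemma codesReal_insert {r : ℕ → Fin 2} (hC : CodesReal s r) :
    CodesReal (insert (k,m) s) r := by
  unfold CodesReal orbitIndex
  rw [closedOrbits_insert hk hm hkm]
  exact hC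

end NewPair

end ZhangAux
namespace ZhangAux

lemma tree_grow {G : Subgroup Perm'} {T : Set (List ℕ)}
    (hT : TreePos (G : Set Perm') T) {t : List ℕ} (ht : t ∈ T) :
    ∀ j : ℕ, ∃ u ∈ T, t <+: u ∧ t.length + j ≤ u.length := by
  intro j
  induction j with
  | zero => exact ⟨t, ht, List.prefix_rfl, by omega⟩
  | succ j ih =>
    obtain ⟨u, hu, hpre, hlen⟩ := ih
    obtain ⟨v, hv, huv, k, hk1, hk2, -⟩ :=
      hT.2 u hu ∅ (Set.empty_subset _) Set.finite_empty
    exact ⟨v, hv, hpre.trans huv, by omega⟩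

lemma tree_iter {G : Subgroup Perm'} {T : Set (List ℕ)}
    (hT : TreePos (G : Set Perm') T) (P₀ : Set Perm') (hP₀G : P₀ ⊆ (G : Set Perm'))
    (hP₀fin : P₀.Finite) {t₀ : List ℕ} (ht₀ : t₀ ∈ T) :
    ∀ j : ℕ, ∃ u ∈ T, ∃ K : Finset ℕ, t₀ <+: u ∧ K.card = j ∧
      ∀ k ∈ K, t₀.length ≤ k ∧ k < u.length ∧ ∀ f ∈ P₀, u.getD k 0 ≠ f k := by
  intro j
  induction j with
  | zero => exact ⟨t₀, ht₀, ∅, List.prefix_rfl, rfl, by simp⟩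
  | succ j ih =>
    obtain ⟨u, hu, K, hpre, hcard, hK⟩ := ih
    obtain ⟨v, hv, huv, k', h1, h2, h3⟩ := hT.2 u hu P₀ hP₀G hP₀fin
    have hk'K : k' ∉ K := fun h => absurd ((hK k' h).2.1) (by omega)
    refine ⟨v, hv, insert k' K, hpre.trans huv, ?_, ?_⟩
    · rw [Finset.card_insert_of_notMem hk'K, hcard]
    · intro k hk
      rcases Finset.mem_insert.1 hk with rfl | hkK
      · exact ⟨le_trans hpre.length_le h1, h2, h3⟩
      · obtain ⟨hk1, hk2, hk3⟩ := hK k hkK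
        obtain ⟨w, rfl⟩ := huv
        rw [List.getD_append u w 0 k hk2]
        exact ⟨hk1, by have : (u ++ w).length = u.length + w.length := List.length_append; omega, hk3⟩

end ZhangAux
open ZhangAux in
/-- The generic hitting lemma for the coding forcing `Z_G(r)`. -/
theorem statement6 (G : Subgroup Perm') (hG : Cofinitary G) (r : ℕ → Fin 2)
    (T : Set (List ℕ)) (hT : TreePos (G : Set Perm') T)
    (t : List ℕ) (ht : t ∈ T)
    (s : Set (ℕ × ℕ)) (E : Set Word) (hc : ZrCond G r s E) :
    ∃ s' : Set (ℕ × ℕ), ZrCond G r s' E ∧ ZLe s' E s E ∧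
      ∃ t' ∈ T, t <+: t' ∧
        ∃ k : ℕ, t.length ≤ k ∧ k < t'.length ∧ (k, t'.getD k 0) ∈ s' := by
  classical
  obtain ⟨⟨hsfin, hsinj, hEfin, hEnice⟩, hNice, hCodes⟩ := hc
  set L : Set Perm' := {g : Perm' | ∃ w ∈ E, Sum.inl g ∈ w} with hLdef
  have hLsub : ∀ g ∈ L, g ∈ G ∧ g ≠ 1 := by
    rintro g ⟨w, hw, hgw⟩
    exact letters_in_G (hEnice w hw) hgw
  have hLfin : L.Finite := by
    have hLeq : L = ⋃ w ∈ E, {g : Perm' | Sum.inl g ∈ w} := by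
      ext g; simp [hLdef]
    rw [hLeq]
    exact hEfin.biUnion fun w _ =>
      (w.finite_toSet).preimage (Sum.inl_injective.injOn)
  have hDfin : (pdom s ∪ pran s).Finite := (hsfin.image _).union (hsfin.image _)
  set B : Set ℕ :=
    (pdom s ∪ pran s) ∪
      ⋃ g ∈ L, ((⇑g⁻¹) '' (pdom s ∪ pran s) ∪ {n : ℕ | g n = n}) with hBdef
  have hBfin : B.Finite :=
    hDfin.union (hLfin.biUnion fun g hg =>
      (hDfin.image _).union (hG g (hLsub g hg).1 (hLsub g hg).2))
  set P₀ : Set Perm' := insert 1 (L ∪ (fun g : Perm' => g⁻¹) '' L) with hP₀def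
  have hP₀G : P₀ ⊆ (G : Set Perm') := by
    rintro f (rfl | hf | ⟨g, hg, rfl⟩)
    · exact G.one_mem
    · exact (hLsub f hf).1
    · exact G.inv_mem (hLsub g hg).1
  have hP₀fin : P₀.Finite := (hLfin.union (hLfin.image _)).insert 1
  obtain ⟨N, hN⟩ : ∃ N : ℕ, ∀ x ∈ B, x ≤ N := by
    obtain ⟨N, hN⟩ := hBfin.bddAbove
    exact ⟨N, fun x hx => hN hx⟩
  obtain ⟨t₀, ht₀T, hpre₀, hlen₀⟩ := tree_grow hT ht (N + 1)
  obtain ⟨u, huT, K, hpre₁, hcard, hK⟩ :=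
    tree_iter hT P₀ hP₀G hP₀fin ht₀T (hBfin.toFinset.card + 1)
  have hnodup : u.Nodup := hT.1.2.2 u huT
  obtain ⟨k, hkK, hmB⟩ : ∃ k ∈ K, u.getD k 0 ∉ B := by
    by_contra hcon
    push_neg at hcon
    have hinj : Set.InjOn (fun k => u.getD k 0) ↑K := by
      intro i hi j hj hij
      have hiu := (hK i (by exact_mod_cast hi)).2.1
      have hju := (hK j (by exact_mod_cast hj)).2.1
      have hij' : u.getD i 0 = u.getD j 0 := hij
      rw [List.getD_eq_getElem u 0 hiu, List.getD_eq_getElem u 0 hju] at hij'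
      exact (hnodup.getElem_inj_iff).1 hij'
    have hsub : K.image (fun k => u.getD k 0) ⊆ hBfin.toFinset := by
      intro x hx
      rcases Finset.mem_image.1 hx with ⟨k, hkK, rfl⟩
      exact hBfin.mem_toFinset.2 (hcon k hkK)
    have hle := Finset.card_le_card hsub
    rw [Finset.card_image_of_injOn hinj, hcard] at hle
    omega
  obtain ⟨hkt₀, hku, hkP⟩ := hK k hkK
  set m := u.getD k 0 with hmdef
  have hkB : k ∉ B := by
    intro h
    have h1 := hN _ h
    have h2 := hpre₀.length_le
    omega
  have hkD : k ∉ pdom s ∪ pran s := fun h => hkB (Or.inl h)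
  have hmD : m ∉ pdom s ∪ pran s := fun h => hmB (Or.inl h)
  have hone : (1 : Perm') ∈ P₀ := Set.mem_insert _ _
  have hkm : k ≠ m := fun h => hkP 1 hone (by simpa using h.symm)
  have hlet : ∀ g ∈ L,
      (g k ∉ pdom s ∪ pran s ∧ g k ≠ k ∧ g k ≠ m) ∧
      (g m ∉ pdom s ∪ pran s ∧ g m ≠ k ∧ g m ≠ m) := by
    intro g hg
    have hgP : g ∈ P₀ := Set.mem_insert_iff.2 (Or.inr (Or.inl hg))
    have hgiP : g⁻¹ ∈ P₀ := Set.mem_insert_iff.2 (Or.inr (Or.inr ⟨g, hg, rfl⟩))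
    refine ⟨⟨?_, ?_, ?_⟩, ?_, ?_, ?_⟩
    · intro h
      exact hkB (Or.inr (Set.mem_biUnion hg (Or.inl ⟨g k, h, by simp⟩)))
    · intro h
      exact hkB (Or.inr (Set.mem_biUnion hg (Or.inr h)))
    · intro h
      exact hkP g hgP h.symm
    · intro h
      exact hmB (Or.inr (Set.mem_biUnion hg (Or.inl ⟨g m, h, by simp⟩)))
    · intro h
      exact hkP g⁻¹ hgiP (by simp [← h])
    · intro h
      exact hmB (Or.inr (Set.mem_biUnion hg (Or.inr h)))
  have hpinj : PartInj (insert (k, m) s) := by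
    constructor
    · intro a b c hab hac
      rcases hab with hab | hab <;> rcases hac with hac | hac
      · rw [Prod.mk.injEq] at hab hac
        exact hab.2.trans hac.2.symm
      · rw [Prod.mk.injEq] at hab
        obtain ⟨rfl, rfl⟩ := hab
        exact absurd (Or.inl (mem_pdom hac)) hkD
      · rw [Prod.mk.injEq] at hac
        obtain ⟨rfl, rfl⟩ := hac
        exact absurd (Or.inl (mem_pdom hab)) hkD
      · exact hsinj.1 hab hac
    · intro a b c hac hbc
      rcases hac with hac | hac <;> rcases hbc with hbc | hbc
      · rw [Prod.mk.injEq] at hac hbc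
        exact hac.1.trans hbc.1.symm
      · rw [Prod.mk.injEq] at hac
        obtain ⟨rfl, rfl⟩ := hac
        exact absurd (Or.inr (mem_pran hbc)) hmD
      · rw [Prod.mk.injEq] at hbc
        obtain ⟨rfl, rfl⟩ := hbc
        exact absurd (Or.inr (mem_pran hac)) hmD
      · exact hsinj.2 hac hbc
  refine ⟨insert (k, m) s,
    ⟨⟨hsfin.insert _, hpinj, hEfin, hEnice⟩,
      niceInj_insert hkD hmD hkm hNice, codesReal_insert hkD hmD hkm hCodes⟩,
    ⟨Set.subset_insert _ _, subset_rfl, ?_⟩,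
    u, huT, hpre₀.trans hpre₁, k, ?_, hku, Set.mem_insert _ _⟩
  · intro w hw
    exact wordFix_insert hkD hmD hkm (hEnice w hw) fun g hgw => hlet g ⟨w, hw, hgw⟩
  · have := hpre₀.length_le
    omega
end
end

section
/- Let G be a cofinitary group, (s,E) a condition of Zhang's forcing Z_G, and n ∈ ℕ not belonging to any closed orbit of s. Then there is K ∈ ℕ such that for every k > K there is a condition (t,E) of Z_G with (t,E) ≤ (s,E) such that the orbit O_t(n) is a closed orbit of t and |O_t(n)| = k. -/
noncomputable section

-- ===================== auxiliary development =====================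
namespace Statement7Aux

lemma mem_pdom {σ : Set (ℕ × ℕ)} {x : ℕ} : x ∈ pdom σ ↔ ∃ y, (x, y) ∈ σ := by
  constructor
  · rintro ⟨⟨a, b⟩, hp, rfl⟩; exact ⟨b, hp⟩
  · rintro ⟨y, h⟩; exact ⟨(x, y), h, rfl⟩

lemma mem_pran {σ : Set (ℕ × ℕ)} {x : ℕ} : x ∈ pran σ ↔ ∃ y, (y, x) ∈ σ := by
  constructor
  · rintro ⟨⟨a, b⟩, hp, rfl⟩; exact ⟨a, hp⟩
  · rintro ⟨y, h⟩; exact ⟨(y, x), h, rfl⟩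

lemma wordRel_append (σ : Set (ℕ × ℕ)) (u v : Word) (a b : ℕ) :
    wordRel σ (u ++ v) a b ↔ ∃ c, wordRel σ v a c ∧ wordRel σ u c b := by
  induction u generalizing b with
  | nil => simp [wordRel]
  | cons l u ih =>
    simp only [List.cons_append, wordRel]
    constructor
    · rintro ⟨c', h1, h2⟩
      obtain ⟨c, hv, hu⟩ := (ih c').mp h1
      exact ⟨c, hv, c', hu, h2⟩
    · rintro ⟨c, hv, c', hu, h2⟩
      exact ⟨c', (ih c').mpr ⟨c, hv, hu⟩, h2⟩

lemma wordRel_mono {σ τ : Set (ℕ × ℕ)} (h : σ ⊆ τ) (w : Word) :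
    ∀ a b, wordRel σ w a b → wordRel τ w a b := by
  induction w with
  | nil => intro a b hw; exact hw
  | cons l u ih =>
    rintro a b ⟨c, h1, h2⟩
    refine ⟨c, ih _ _ h1, ?_⟩
    cases l with
    | inl g => exact h2
    | inr bb => cases bb <;> exact h h2

/-- forward run -/
def Fw (q : ℕ) : Word := List.replicate q (Sum.inr true)

/-- backward run -/
def Bw (q : ℕ) : Word := List.replicate q (Sum.inr false)

lemma wordRel_Fw_succ (σ : Set (ℕ × ℕ)) (q : ℕ) (a b : ℕ) :
    wordRel σ (Fw (q + 1)) a b ↔ ∃ c, wordRel σ (Fw q) a c ∧ (c, b) ∈ σ := by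
  simp [Fw, List.replicate_succ, wordRel, letterRel]

lemma wordRel_Bw_succ (σ : Set (ℕ × ℕ)) (q : ℕ) (a b : ℕ) :
    wordRel σ (Bw (q + 1)) a b ↔ ∃ c, wordRel σ (Bw q) a c ∧ (b, c) ∈ σ := by
  simp [Bw, List.replicate_succ, wordRel, letterRel]

lemma wordRel_single (σ : Set (ℕ × ℕ)) (l : Letter) (a b : ℕ) :
    wordRel σ [l] a b ↔ letterRel σ l a b := by
  simp [wordRel]

lemma wordRel_Fw_first (σ : Set (ℕ × ℕ)) (q : ℕ) (a b : ℕ) :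
    wordRel σ (Fw (q + 1)) a b ↔ ∃ c, (a, c) ∈ σ ∧ wordRel σ (Fw q) c b := by
  have h : Fw (q + 1) = Fw q ++ [Sum.inr true] := by
    simp [Fw, List.replicate_succ']
  rw [h, wordRel_append]
  simp [wordRel_single, letterRel]

lemma wordRel_Bw_first (σ : Set (ℕ × ℕ)) (q : ℕ) (a b : ℕ) :
    wordRel σ (Bw (q + 1)) a b ↔ ∃ c, (c, a) ∈ σ ∧ wordRel σ (Bw q) c b := by
  have h : Bw (q + 1) = Bw q ++ [Sum.inr false] := by
    simp [Bw, List.replicate_succ']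
  rw [h, wordRel_append]
  simp [wordRel_single, letterRel]

lemma wordRel_Bw_rev (σ : Set (ℕ × ℕ)) (q : ℕ) :
    ∀ a b, wordRel σ (Bw q) a b ↔ wordRel σ (Fw q) b a := by
  induction q with
  | zero =>
    intro a b
    constructor <;> (intro h; exact h.symm)
  | succ q ih =>
    intro a b
    rw [wordRel_Bw_succ, wordRel_Fw_first]
    constructor
    · rintro ⟨c, h1, h2⟩; exact ⟨c, h2, (ih a c).mp h1⟩
    · rintro ⟨c, h1, h2⟩; exact ⟨c, (ih a c).mpr h2, h1⟩

lemma wordRel_Fw_mem {σ : Set (ℕ × ℕ)} {q a b : ℕ} (hq : 0 < q)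
    (h : wordRel σ (Fw q) a b) : a ∈ pdom σ ∧ b ∈ pran σ := by
  obtain ⟨q, rfl⟩ : ∃ q', q = q' + 1 := ⟨q - 1, by omega⟩
  constructor
  · obtain ⟨c, h1, _⟩ := (wordRel_Fw_first σ q a b).mp h
    exact mem_pdom.mpr ⟨c, h1⟩
  · obtain ⟨c, _, h2⟩ := (wordRel_Fw_succ σ q a b).mp h
    exact mem_pran.mpr ⟨c, h2⟩

lemma wordRel_Bw_mem {σ : Set (ℕ × ℕ)} {q a b : ℕ} (hq : 0 < q)
    (h : wordRel σ (Bw q) a b) : a ∈ pran σ ∧ b ∈ pdom σ := by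
  have h' := (wordRel_Bw_rev σ q a b).mp h
  have := wordRel_Fw_mem hq h'
  exact ⟨this.2, this.1⟩

lemma xpow_of_nonneg {kz : ℤ} (h : 0 ≤ kz) : xpow kz = Fw kz.toNat := if_pos h

lemma xpow_of_neg {kz : ℤ} (h : ¬ 0 ≤ kz) : xpow kz = Bw (-kz).toNat := if_neg h


lemma mem_relOrbit_self (R : ℕ → ℕ → Prop) (n : ℕ) : n ∈ relOrbit R n := by
  intro O hO; exact hO.1

lemma relClosed_relOrbit (R : ℕ → ℕ → Prop) (n : ℕ) : RelClosed R (relOrbit R n) := by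
  intro a b hab
  constructor
  · intro ha O hO; exact (hO.2 a b hab).mp (ha O hO)
  · intro hb O hO; exact (hO.2 a b hab).mpr (hb O hO)

lemma relOrbit_subset {R : ℕ → ℕ → Prop} {n : ℕ} {O : Set ℕ} (h1 : n ∈ O)
    (h2 : RelClosed R O) : relOrbit R n ⊆ O :=
  Set.sInter_subset_of_mem ⟨h1, h2⟩

lemma relClosed_swap (R : ℕ → ℕ → Prop) (O : Set ℕ) :
    RelClosed (fun a b => R b a) O ↔ RelClosed R O := by
  constructor
  · intro h a b hab; exact (h b a hab).symm
  · intro h a b hab; exact (h b a hab).symm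

lemma relOrbit_swap (R : ℕ → ℕ → Prop) (n : ℕ) :
    relOrbit (fun a b => R b a) n = relOrbit R n := by
  unfold relOrbit
  congr 1
  ext O
  simp [relClosed_swap]

lemma relClosedOrbits_swap (R : ℕ → ℕ → Prop) :
    relClosedOrbits (fun a b => R b a) = relClosedOrbits R := by
  have h1 : relOrbits (fun a b => R b a) = relOrbits R := by
    unfold relOrbits
    ext O
    simp [relOrbit_swap]
  have h2 : relDom (fun a b => R b a) = relRan R := rfl
  have h3 : relRan (fun a b => R b a) = relDom R := rfl
  unfold relClosedOrbits
  rw [h1, h2, h3, Set.inter_comm]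

/-- If a deterministic chain along `R` repeats, its start lies in a closed orbit. -/
lemma cycle_mem (R : ℕ → ℕ → Prop)
    (hfun : ∀ a b c, R a b → R a c → b = c)
    (hinj2 : ∀ a b c, R a c → R b c → a = b)
    (u : ℕ → ℕ) (hedge : ∀ i, R (u i) (u (i + 1)))
    (i j : ℕ) (hij : i < j) (heq : u i = u j) :
    u 0 ∈ ⋃₀ relClosedOrbits R := by
  set p := j - i with hp
  have hp0 : 0 < p := by omega
  -- push the repetition down to 0
  have hdown : ∀ l, l ≤ i → u (i - l) = u (i - l + p) := by
    intro l
    induction l with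
    | zero =>
      intro _
      have : u (i - 0) = u (i - 0 + p) := by
        have h2 : i - 0 + p = j := by omega
        have h3 : i - 0 = i := by omega
        rw [h2, h3]; exact heq
      exact this
    | succ l ih =>
      intro hl
      have h1 := ih (by omega)
      have e1 : R (u (i - (l+1))) (u (i - l)) := by
        have := hedge (i - (l+1)); convert this using 2; omega
      have e2 : R (u (i - (l+1) + p)) (u (i - l + p)) := by
        have := hedge (i - (l+1) + p); convert this using 2; omega
      rw [h1] at e1
      exact hinj2 _ _ _ e1 e2
  have h0 : u 0 = u p := by
    have := hdown i (le_refl i)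
    simpa using this
  -- forward periodicity
  have hper : ∀ r, u (r + p) = u r := by
    intro r
    induction r with
    | zero => simpa using h0.symm
    | succ r ih =>
      have e1 : R (u (r + p)) (u (r + p + 1)) := hedge _
      have e2 : R (u r) (u (r + 1)) := hedge _
      rw [ih] at e1
      have := hfun _ _ _ e1 e2
      simpa [Nat.succ_add] using this
  set O : Set ℕ := Set.range u with hO
  have hclosed : RelClosed R O := by
    intro a b hab
    constructor
    · rintro ⟨r, rfl⟩
      have := hfun _ _ _ hab (hedge r)
      exact ⟨r + 1, (this ▸ rfl)⟩
    · rintro ⟨r, rfl⟩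
      have e1 : R (u (r + p - 1)) (u (r + p)) := by
        have := hedge (r + p - 1); convert this using 2; omega
      rw [hper r] at e1
      have := hinj2 _ _ _ hab e1
      exact ⟨r + p - 1, this ▸ rfl⟩
  have hmem : u 0 ∈ O := ⟨0, rfl⟩
  have horbit : O = relOrbit R (u 0) := by
    apply le_antisymm
    · rintro x ⟨r, rfl⟩
      induction r with
      | zero => exact mem_relOrbit_self R (u 0)
      | succ r ih =>
        exact (relClosed_relOrbit R (u 0) _ _ (hedge r)).mp ih
    · exact relOrbit_subset hmem hclosed
  refine ⟨O, ⟨⟨u 0, horbit⟩, ?_⟩, hmem⟩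
  rintro x ⟨r, rfl⟩
  constructor
  · exact ⟨u (r + 1), hedge r⟩
  · have e1 : R (u (r + p - 1)) (u (r + p)) := by
      have := hedge (r + p - 1); convert this using 2; omega
    rw [hper r] at e1
    exact ⟨u (r + p - 1), e1⟩


/-- Extraction of the (open) orbit of `n` as a finite path. -/
lemma exists_path (s : Set (ℕ × ℕ)) (hfin : s.Finite) (hinj : PartInj s) (n : ℕ)
    (hn : n ∉ ⋃₀ relClosedOrbits (sRel s)) :
    ∃ (m₀ : ℕ) (a : ℕ → ℕ), 0 < m₀ ∧
      (∀ i j, i < m₀ → j < m₀ → a i = a j → i = j) ∧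
      (∃ i, i < m₀ ∧ a i = n) ∧
      (∀ i, i + 1 < m₀ → (a i, a (i + 1)) ∈ s) ∧
      a 0 ∉ pran s ∧ a (m₀ - 1) ∉ pdom s := by
  classical
  -- forward chain
  set next : ℕ → ℕ := fun x => if h : ∃ y, (x, y) ∈ s then h.choose else x with hnextdef
  have hnext1 : ∀ x y, (x, y) ∈ s → next x = y := by
    intro x y hxy
    have h : ∃ y, (x, y) ∈ s := ⟨y, hxy⟩
    have h2 : (x, h.choose) ∈ s := h.choose_spec
    simp only [hnextdef, dif_pos h]
    exact hinj.1 h2 hxy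
  have hnext2 : ∀ x, (∃ y, (x, y) ∈ s) → (x, next x) ∈ s := by
    intro x h
    simp only [hnextdef, dif_pos h]
    exact h.choose_spec
  have hnext3 : ∀ x, ¬ (∃ y, (x, y) ∈ s) → next x = x := by
    intro x h; simp only [hnextdef, dif_neg h]
  set u : ℕ → ℕ := fun i => next^[i] n with hudef
  have hu0 : u 0 = n := rfl
  have husucc : ∀ i, u (i + 1) = next (u i) := by
    intro i; simp only [hudef, Function.iterate_succ_apply']
  -- backward chain
  set prev : ℕ → ℕ := fun x => if h : ∃ c, (c, x) ∈ s then h.choose else x with hprevdef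
  have hprev1 : ∀ x c, (c, x) ∈ s → prev x = c := by
    intro x c hxc
    have h : ∃ c, (c, x) ∈ s := ⟨c, hxc⟩
    have h2 : (h.choose, x) ∈ s := h.choose_spec
    simp only [hprevdef, dif_pos h]
    exact hinj.2 h2 hxc
  have hprev2 : ∀ x, (∃ c, (c, x) ∈ s) → (prev x, x) ∈ s := by
    intro x h
    simp only [hprevdef, dif_pos h]
    exact h.choose_spec
  set w : ℕ → ℕ := fun i => prev^[i] n with hwdef
  have hw0 : w 0 = n := rfl
  have hwsucc : ∀ i, w (i + 1) = prev (w i) := by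
    intro i; simp only [hwdef, Function.iterate_succ_apply']
  -- the forward chain must die
  have hfwd : ∃ i, u i ∉ pdom s := by
    by_contra h
    push_neg at h
    have hedge : ∀ i, sRel s (u i) (u (i + 1)) := by
      intro i
      obtain ⟨y, hy⟩ := mem_pdom.mp (h i)
      rw [husucc i, hnext1 _ _ hy]; exact hy
    obtain ⟨i, -, j, -, hne, heq⟩ :=
      Set.infinite_univ.exists_ne_map_eq_of_mapsTo
        (fun i _ => h i) (hfin.image Prod.fst)
    rcases Nat.lt_or_ge i j with hij | hij
    · exact hn (hu0 ▸ cycle_mem (sRel s) (fun a b c h1 h2 => hinj.1 h1 h2) (fun a b c h1 h2 => hinj.2 h1 h2) u hedge i j hij heq)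
    · have hij' : j < i := by omega
      exact hn (hu0 ▸ cycle_mem (sRel s) (fun a b c h1 h2 => hinj.1 h1 h2) (fun a b c h1 h2 => hinj.2 h1 h2) u hedge j i hij' heq.symm)
  have hbwd : ∃ i, w i ∉ pran s := by
    by_contra h
    push_neg at h
    have hedge : ∀ i, (fun a b => sRel s b a) (w i) (w (i + 1)) := by
      intro i
      obtain ⟨y, hy⟩ := mem_pran.mp (h i)
      simp only [sRel]
      rw [hwsucc i, hprev1 _ _ hy]; exact hy
    have key : ∀ i j, i < j → w i = w j → False := by
      intro i j hij heq
      have := cycle_mem (fun a b => sRel s b a)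
        (fun a b c h1 h2 => hinj.2 h1 h2) (fun a b c h1 h2 => hinj.1 h1 h2)
        w hedge i j hij heq
      rw [relClosedOrbits_swap] at this
      exact hn (hw0 ▸ this)
    obtain ⟨i, -, j, -, hne, heq⟩ :=
      Set.infinite_univ.exists_ne_map_eq_of_mapsTo
        (fun i _ => h i) (hfin.image Prod.snd)
    rcases Nat.lt_or_ge i j with hij | hij
    · exact key i j hij heq
    · exact key j i (by omega) heq.symm
  set m : ℕ := Nat.find hfwd with hmdef
  have hm : u m ∉ pdom s := Nat.find_spec hfwd
  have hmlt : ∀ i, i < m → u i ∈ pdom s := by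
    intro i hi
    by_contra h
    exact Nat.find_min hfwd hi h
  have huedge : ∀ i, i < m → (u i, u (i + 1)) ∈ s := by
    intro i hi
    obtain ⟨y, hy⟩ := mem_pdom.mp (hmlt i hi)
    rw [husucc i, hnext1 _ _ hy]; exact hy
  set m' : ℕ := Nat.find hbwd with hm'def
  have hm' : w m' ∉ pran s := Nat.find_spec hbwd
  have hm'lt : ∀ i, i < m' → w i ∈ pran s := by
    intro i hi
    by_contra h
    exact Nat.find_min hbwd hi h
  have hwedge : ∀ i, i < m' → (w (i + 1), w i) ∈ s := by
    intro i hi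
    obtain ⟨y, hy⟩ := mem_pran.mp (hm'lt i hi)
    rw [hwsucc i, hprev1 _ _ hy]; exact hy
  -- determinism shifts
  have hushift : ∀ i r, u (i + r) = next^[r] (u i) := by
    intro i r
    simp only [hudef]
    rw [Nat.add_comm i r, Function.iterate_add_apply]
  -- nodup of u up to m
  have hunodup : ∀ i j, i ≤ m → j ≤ m → i < j → u i ≠ u j := by
    intro i j him hjm hij heq
    have hper : ∀ r, u (i + r) = u (j + r) := by
      intro r
      rw [hushift i r, hushift j r, heq]
    have := hper (m - j)
    have h1 : j + (m - j) = m := by omega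
    rw [h1] at this
    have h2 : i + (m - j) < m := by omega
    exact hm (this ▸ hmlt _ h2)
  have hwnodup : ∀ i j, i ≤ m' → j ≤ m' → i < j → w i ≠ w j := by
    intro i j him hjm hij heq
    have hwshift : ∀ i r, w (i + r) = prev^[r] (w i) := by
      intro i r
      simp only [hwdef]
      rw [Nat.add_comm i r, Function.iterate_add_apply]
    have hper : ∀ r, w (i + r) = w (j + r) := by
      intro r
      rw [hwshift i r, hwshift j r, heq]
    have := hper (m' - j)
    have h1 : j + (m' - j) = m' := by omega
    rw [h1] at this
    have h2 : i + (m' - j) < m' := by omega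
    exact hm' (this ▸ hm'lt _ h2)
  -- cross disjointness
  have hcross : ∀ i j, i ≤ m' → j ≤ m → w i = u j → i = 0 ∧ j = 0 := by
    intro i j him hjm heq
    by_contra hcon
    have hij : 0 < i ∨ 0 < j := by omega
    rcases Nat.eq_zero_or_pos i with hi0 | hi0
    · subst hi0
      rcases hij with h | h
      · omega
      · exact hunodup 0 j (by omega) hjm h (by rw [hu0, ← hw0, heq]) 
    · -- i ≥ 1 : iterate next i times from w i gives n
      have hback : ∀ r, r ≤ i → next^[r] (w i) = w (i - r) := by
        intro r
        induction r with
        | zero => intro _; simp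
        | succ r ih =>
          intro hr
          have h1 := ih (by omega)
          rw [Function.iterate_succ_apply', h1]
          have hedge : (w (i - r), w (i - r - 1)) ∈ s := by
            have := hwedge (i - r - 1) (by omega)
            have e : i - r - 1 + 1 = i - r := by omega
            rw [e] at this; exact this
          rw [hnext1 _ _ hedge]
          exact congrArg w (by omega)
      have hn' : u (j + i) = n := by
        rw [hushift j i, ← heq, hback i (le_refl i)]
        simp [hw0]
      have hpos : 0 < j + i := by omega
      -- u 0 = u (j+i)
      have hper0 : u (j + i) = u 0 := by rw [hn', hu0]
      set p := j + i with hpdef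
      have hperiod : ∀ r, u (p + r) = u r := by
        intro r
        rw [hushift p r, hper0, hu0]
      rcases le_or_gt p m with hpm | hpm
      · -- m mod p < p ≤ m contradiction with minimality
        have hmod : ∀ c, u (m - c * p) = u m → c * p ≤ m → u (m - (c+1) * p) = u m ∨ m < (c+1) * p := by
          intro c hc hcp
          rcases le_or_gt ((c+1) * p) m with h | h
          · left
            have : u (p + (m - (c+1) * p)) = u (m - (c+1)*p) := hperiod _
            have e : p + (m - (c+1) * p) = m - c * p := by
              have : c * p + p = (c+1) * p := by ring
              omega
            rw [e] at this
            rw [← hc, ← this]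
          · right; exact h
        -- find c with m - c*p < p and u (m - c*p) = u m
        have main : ∀ c, c * p ≤ m → u (m - c * p) = u m := by
          intro c
          induction c with
          | zero => intro _; simp
          | succ c ih =>
            intro hc
            have h1 : c * p ≤ m := by
              have : c * p ≤ (c+1) * p := by nlinarith
              omega
            have := hmod c (ih h1) h1
            rcases this with h | h
            · exact h
            · omega
          
        have hc := main (m / p) (by
          have := Nat.div_mul_le_self m p
          omega)
        have hmod2 : m % p < p := Nat.mod_lt m (by omega)
        have heqm : m / p * p + m % p = m := Nat.div_add_mod' m p
        have hlt : m - (m / p) * p < p := by omega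
        have hlt2 : m - (m / p) * p < m := by omega
        exact hm (hc ▸ hmlt _ hlt2)
      · -- p > m : then m = 0 and j = 0, contradiction via w nodup
        have hstall : ∀ r, m ≤ r → u r = u m := by
          intro r
          induction r with
          | zero => intro h; have : m = 0 := by omega
                    rw [this]
          | succ r ih =>
            intro h
            rcases Nat.lt_or_ge m (r+1) with h1 | h1
            · have h2 := ih (by omega)
              rw [husucc r, h2]
              exact (congrArg _ (rfl)).trans (by
                rw [hnext3 _ (fun hex => hm (mem_pdom.mpr hex))])
            · have : m = r + 1 := by omega
              rw [this]
        have hum : u p = u m := hstall p (by omega)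
        have hn'' : u m = n := by rw [← hum, hper0, hu0]
        have hm0 : m = 0 := by
          by_contra h
          have := hmlt 0 (by omega)
          rw [hu0] at this
          rw [← hn''] at this
          exact hm this
        have hj0 : j = 0 := by omega
        have hip : p = i := by omega
        -- w i = u 0 = n = w 0, i > 0
        have : w i = w 0 := by rw [hw0, heq, hj0, hu0]
        exact hwnodup 0 i (by omega) him hi0 this.symm
  -- assemble the path
  refine ⟨m' + m + 1, fun r => if r ≤ m' then w (m' - r) else u (r - m'), by omega, ?_, ?_, ?_, ?_, ?_⟩
  · -- injectivity
    intro i j hi hj heq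
    by_contra hne
    rcases Nat.lt_or_ge i j with hij | hij
    case _ =>
      by_cases h1 : j ≤ m'
      · have h2 : i ≤ m' := by omega
        simp only [if_pos h1, if_pos h2] at heq
        exact hwnodup (m' - j) (m' - i) (by omega) (by omega) (by omega) heq.symm
      · by_cases h2 : i ≤ m'
        · simp only [if_pos h2, if_neg h1] at heq
          obtain ⟨e1, e2⟩ := hcross (m' - i) (j - m') (by omega) (by omega) heq
          omega
        · simp only [if_neg h1, if_neg h2] at heq
          exact hunodup (i - m') (j - m') (by omega) (by omega) (by omega) heq
    case _ =>
      have hij' : j < i := by omega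
      by_cases h1 : i ≤ m'
      · have h2 : j ≤ m' := by omega
        simp only [if_pos h1, if_pos h2] at heq
        exact hwnodup (m' - i) (m' - j) (by omega) (by omega) (by omega) heq
      · by_cases h2 : j ≤ m'
        · simp only [if_pos h2, if_neg h1] at heq
          obtain ⟨e1, e2⟩ := hcross (m' - j) (i - m') (by omega) (by omega) heq.symm
          omega
        · simp only [if_neg h1, if_neg h2] at heq
          exact hunodup (j - m') (i - m') (by omega) (by omega) (by omega) heq.symm
  · -- n is on the path
    exact ⟨m', by omega, by simp [hw0]⟩
  · -- edges
    intro i hi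
    by_cases h1 : i + 1 ≤ m'
    · have h2 : i ≤ m' := by omega
      simp only [if_pos h1, if_pos h2]
      have := hwedge (m' - i - 1) (by omega)
      have e : m' - i - 1 + 1 = m' - i := by omega
      rw [e] at this
      have e2 : m' - (i + 1) = m' - i - 1 := by omega
      rw [e2]
      exact this
    · by_cases h2 : i ≤ m'
      · have h3 : i = m' := by omega
        simp only [if_pos h2, if_neg h1]
        subst h3
        have e1 : m' - m' = 0 := by omega
        have e2 : m' + 1 - m' = 1 := by omega
        rw [e1, e2, hw0, ← hu0]
        exact huedge 0 (by omega)
      · simp only [if_neg h1, if_neg h2]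
        have e : i + 1 - m' = (i - m') + 1 := by omega
        rw [e]
        exact huedge (i - m') (by omega)
  · -- left endpoint
    simp only [if_pos (by omega : (0:ℕ) ≤ m'), Nat.sub_zero]
    exact hm'
  · -- right endpoint
    by_cases h1 : m' + m + 1 - 1 ≤ m'
    · have h2 : m = 0 := by omega
      simp only [if_pos h1]
      have e : m' - (m' + m + 1 - 1) = 0 := by omega
      rw [e, hw0]
      rw [h2] at hm
      rw [hu0] at hm
      exact hm
    · simp only [if_neg h1]
      have e : m' + m + 1 - 1 - m' = m := by omega
      rw [e]
      exact hm


/-- Choice of fresh points avoiding a finite set and generic for a finite set of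
permutations. -/
lemma exists_fresh (D : Set ℕ) (hD : D.Finite) (Γ : Set Perm') (hΓ : Γ.Finite)
    (hfix : ∀ g ∈ Γ, {x : ℕ | g x = x}.Finite) (q : ℕ) :
    ∃ f : ℕ → ℕ, (∀ i, i < q → f i ∉ D) ∧
      (∀ i j, i < q → j < q → f i = f j → i = j) ∧
      (∀ g ∈ Γ, ∀ i, i < q →
        g (f i) ∉ D ∧ (∀ j, j < q → g (f i) ≠ f j) ∧ (∀ e ∈ D, g e ≠ f i)) := by
  classical
  induction q with
  | zero => exact ⟨id, by omega, by omega, fun g hg i hi => by omega⟩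
  | succ q ih =>
    obtain ⟨f, h1, h2, h3⟩ := ih
    set S : Set ℕ := D ∪ f '' Set.Iio q with hSdef
    have hS : S.Finite := hD.union ((Set.finite_Iio q).image f)
    set Bad : Set ℕ := S ∪ ⋃ g ∈ Γ, ((⇑g ⁻¹' S) ∪ (⇑g '' S) ∪ {x | g x = x}) with hBad
    have hBadFin : Bad.Finite := by
      refine hS.union (Set.Finite.biUnion hΓ ?_)
      intro g hg
      refine (Set.Finite.union ?_ (hS.image _)).union (hfix g hg)
      exact hS.preimage (g.injective.injOn)
    obtain ⟨z, hz⟩ := hBadFin.infinite_compl.nonempty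
    have hzS : z ∉ S := fun h => hz (Or.inl h)
    have hzg : ∀ g ∈ Γ, g z ∉ S ∧ z ∉ ⇑g '' S ∧ g z ≠ z := by
      intro g hg
      refine ⟨fun h => hz ?_, fun h => hz ?_, fun h => hz ?_⟩
      · exact Or.inr (Set.mem_biUnion hg (Or.inl (Or.inl h)))
      · exact Or.inr (Set.mem_biUnion hg (Or.inl (Or.inr h)))
      · exact Or.inr (Set.mem_biUnion hg (Or.inr h))
    have hzD : z ∉ D := fun h => hzS (Or.inl h)
    have hzf : ∀ i, i < q → z ≠ f i := by
      intro i hi h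
      exact hzS (Or.inr ⟨i, hi, h.symm⟩)
    have hupd : ∀ j, j < q → Function.update f q z j = f j := by
      intro j hj
      exact Function.update_of_ne (Nat.ne_of_lt hj) z f
    have hupdq : Function.update f q z q = z := Function.update_self q z f
    refine ⟨Function.update f q z, ?_, ?_, ?_⟩
    · intro i hi
      rcases Nat.lt_succ_iff_lt_or_eq.mp hi with h | h
      · rw [hupd i h]; exact h1 i h
      · subst h; rw [hupdq]; exact hzD
    · intro i j hi hj heq
      rcases Nat.lt_succ_iff_lt_or_eq.mp hi with h | h <;>
        rcases Nat.lt_succ_iff_lt_or_eq.mp hj with h' | h'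
      · rw [hupd i h, hupd j h'] at heq
        exact h2 i j h h' heq
      · subst h'
        rw [hupd i h, hupdq] at heq
        exact absurd heq.symm (hzf i h)
      · subst h
        rw [hupdq, hupd j h'] at heq
        exact absurd heq (hzf j h')
      · omega
    · intro g hg i hi
      obtain ⟨hg1, hg2, hg3⟩ := hzg g hg
      rcases Nat.lt_succ_iff_lt_or_eq.mp hi with h | h
      · rw [hupd i h]
        refine ⟨(h3 g hg i h).1, ?_, ?_⟩
        · intro j hj
          rcases Nat.lt_succ_iff_lt_or_eq.mp hj with h' | h'
          · rw [hupd j h']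
            exact (h3 g hg i h).2.1 j h'
          · subst h'
            rw [hupdq]
            intro he
            exact hg2 ⟨f i, Or.inr ⟨i, h, rfl⟩, he⟩
        · intro e he hee
          exact (h3 g hg i h).2.2 e he hee
      · subst h
        rw [hupdq]
        refine ⟨fun h => hg1 (Or.inl h), ?_, ?_⟩
        · intro j hj
          rcases Nat.lt_succ_iff_lt_or_eq.mp hj with h' | h'
          · rw [hupd j h']
            intro he
            exact hg1 (Or.inr ⟨j, h', he.symm⟩)
          · subst h'
            rw [hupdq]
            exact hg3
        · intro e he hee
          exact hg2 ⟨e, Or.inl he, hee⟩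


lemma xpow_length (kz : ℤ) : (xpow kz).length = kz.natAbs := by
  unfold xpow
  split
  · rw [List.length_replicate]; omega
  · rw [List.length_replicate]; omega

lemma nice_letters {G : Subgroup Perm'} {w : Word} (h : IsNice G w) :
    ∀ g : Perm', Sum.inl g ∈ w → g ∈ G ∧ g ≠ 1 := by
  intro g hg
  rcases h with ⟨k, hk, rfl⟩ | ⟨bs, hbs, hmem, hlast, rfl⟩
  · exfalso
    rw [xpow_of_nonneg (by positivity)] at hg
    have := List.eq_of_mem_replicate hg
    exact absurd this (by simp)
  · rw [List.mem_flatten] at hg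
    obtain ⟨l, hl, hgl⟩ := hg
    rw [List.mem_map] at hl
    obtain ⟨p, hp, rfl⟩ := hl
    unfold blockWord at hgl
    rcases List.mem_cons.mp hgl with h | h
    · obtain rfl : g = p.1 := by injection h
      exact ⟨(hmem p hp).1, (hmem p hp).2.1⟩
    · exfalso
      unfold xpow at h
      split at h
      · have := List.eq_of_mem_replicate h
        exact absurd this (by simp)
      · have := List.eq_of_mem_replicate h
        exact absurd this (by simp)

lemma block_natAbs_le {bs : List (Perm' × ℤ)} {p : Perm' × ℤ} (hp : p ∈ bs) :
    p.2.natAbs ≤ ((bs.map blockWord).flatten).length := by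
  have h1 : blockWord p ∈ bs.map blockWord := List.mem_map_of_mem (f := blockWord) hp
  have h2 := (List.sublist_flatten_of_mem h1).length_le
  have h3 : (blockWord p).length = 1 + p.2.natAbs := by
    unfold blockWord
    rw [List.length_cons, xpow_length]
    omega
  omega

lemma inl_mem_flatten {bs : List (Perm' × ℤ)} {p : Perm' × ℤ} (hp : p ∈ bs) :
    (Sum.inl p.1 : Letter) ∈ (bs.map blockWord).flatten := by
  rw [List.mem_flatten]
  exact ⟨blockWord p, List.mem_map_of_mem (f := blockWord) hp, List.mem_cons_self⟩

end Statement7Aux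

open Statement7Aux in
/-- Generic closing of orbits: if `n` does not belong to any closed orbit of
`s`, then for all sufficiently large `k` there is an extension `(t,E) ≤ (s,E)`
in which the orbit of `n` is closed and has cardinality exactly `k`. -/
theorem statement7 (G : Subgroup Perm') (hG : Cofinitary G)
    (s : Set (ℕ × ℕ)) (E : Set Word) (hc : ZCond G s E)
    (n : ℕ) (hn : n ∉ ⋃₀ relClosedOrbits (sRel s)) :
    ∃ K : ℕ, ∀ k : ℕ, K < k →
      ∃ t : Set (ℕ × ℕ), ZCond G t E ∧ ZLe t E s E ∧
        relOrbit (sRel t) n ∈ relClosedOrbits (sRel t) ∧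
        (relOrbit (sRel t) n).ncard = k := by
  classical
  obtain ⟨hsfin, hsinj, hEfin, hEnice⟩ := hc
  obtain ⟨m₀, a, hm₀, hainj, ⟨i₀, hi₀, hai₀⟩, haedge, ha0, halast⟩ :=
    exists_path s hsfin hsinj n hn
  set D : Set ℕ := pdom s ∪ pran s ∪ {n} with hDdef
  have hDfin : D.Finite :=
    ((hsfin.image Prod.fst).union (hsfin.image Prod.snd)).union (Set.finite_singleton n)
  have hdomD : pdom s ⊆ D := fun x hx => Or.inl (Or.inl hx)
  have hranD : pran s ⊆ D := fun x hx => Or.inl (Or.inr hx)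
  set Γ : Set Perm' := {g | ∃ w ∈ E, (Sum.inl g : Letter) ∈ w} with hΓdef
  have hΓfin : Γ.Finite := by
    have hΓeq : Γ = ⋃ w ∈ E, {g : Perm' | (Sum.inl g : Letter) ∈ w} := by
      ext g; simp [hΓdef]
    rw [hΓeq]
    refine Set.Finite.biUnion hEfin (fun w _ => ?_)
    have h1 : {g : Perm' | (Sum.inl g : Letter) ∈ w} =
        (fun g : Perm' => (Sum.inl g : Letter)) ⁻¹' {l | l ∈ w} := rfl
    rw [h1]
    exact (w.finite_toSet).preimage (fun x _ y _ h => by injection h)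
  have hΓG : ∀ g ∈ Γ, g ∈ G ∧ g ≠ 1 := by
    rintro g ⟨w, hw, hgw⟩
    exact nice_letters (hEnice w hw) g hgw
  have hfixΓ : ∀ g ∈ Γ, {x : ℕ | g x = x}.Finite := fun g hg =>
    hG g (hΓG g hg).1 (hΓG g hg).2
  set M : ℕ := hEfin.toFinset.sup List.length with hMdef
  have hM : ∀ w ∈ E, w.length ≤ M := fun w hw =>
    Finset.le_sup (f := List.length) (hEfin.mem_toFinset.mpr hw)
  refine ⟨m₀ + M, fun k hk => ?_⟩
  have hm₀k : m₀ < k := by omega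
  have hk1 : 1 < k := by omega
  obtain ⟨f, hf1, hf2, hf3⟩ := exists_fresh D hDfin Γ hΓfin hfixΓ (k - m₀)
  set v : ℕ → ℕ := fun i => if i < m₀ then a i else f (i - m₀) with hvdef
  have hvL : ∀ i, i < m₀ → v i = a i := fun i hi => if_pos hi
  have hvB : ∀ i, m₀ ≤ i → v i = f (i - m₀) := fun i hi => if_neg (by omega)
  have haD : ∀ i, i < m₀ → a i ∈ D := by
    intro i hi
    by_cases h1 : i + 1 < m₀
    · exact hdomD (mem_pdom.mpr ⟨a (i + 1), haedge i h1⟩)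
    · by_cases h2 : 0 < i
      · refine hranD (mem_pran.mpr ⟨a (i - 1), ?_⟩)
        have hh := haedge (i - 1) (by omega)
        have e : i - 1 + 1 = i := by omega
        rw [e] at hh
        exact hh
      · have hi0 : i = 0 := by omega
        have : i₀ = 0 := by omega
        subst hi0
        rw [← this, hai₀]
        exact Or.inr rfl
  have hvD : ∀ i, i < m₀ → v i ∈ D := fun i hi => (hvL i hi) ▸ haD i hi
  have hvnotD : ∀ i, m₀ ≤ i → i < k → v i ∉ D := by
    intro i h1 h2
    rw [hvB i h1]
    exact hf1 (i - m₀) (by omega)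
  have hvinj : ∀ i j, i < k → j < k → v i = v j → i = j := by
    intro i j hi hj heq
    by_cases h1 : i < m₀ <;> by_cases h2 : j < m₀
    · rw [hvL i h1, hvL j h2] at heq; exact hainj i j h1 h2 heq
    · exfalso; rw [hvL i h1] at heq
      exact hvnotD j (by omega) hj (heq ▸ haD i h1)
    · exfalso; rw [hvL j h2] at heq
      exact hvnotD i (by omega) hi (heq.symm ▸ haD j h2)
    · rw [hvB i (by omega), hvB j (by omega)] at heq
      have := hf2 (i - m₀) (j - m₀) (by omega) (by omega) heq
      omega
  set C : Set ℕ := v '' Set.Iio k with hCdef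
  have hCv : ∀ i, i < k → v i ∈ C := fun i hi => ⟨i, hi, rfl⟩
  set t : Set (ℕ × ℕ) := s ∪ (fun i => (v i, v ((i + 1) % k))) '' Set.Iio k with htdef
  have hsub : s ⊆ t := Set.subset_union_left
  have hnew : ∀ i, i < k → (v i, v ((i + 1) % k)) ∈ t := fun i hi =>
    Or.inr ⟨i, hi, rfl⟩
  have hrigid_out : ∀ i d, i < m₀ → (a i, d) ∈ s → i + 1 < m₀ ∧ d = a (i + 1) := by
    intro i d hi hd
    have hi1 : i + 1 < m₀ := by
      by_contra h
      have e : i = m₀ - 1 := by omega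
      rw [e] at hd
      exact halast (mem_pdom.mpr ⟨d, hd⟩)
    exact ⟨hi1, hsinj.1 hd (haedge i hi1)⟩
  have hrigid_in : ∀ j c, j < m₀ → (c, a j) ∈ s → 0 < j ∧ c = a (j - 1) := by
    intro j c hj hc
    have hj1 : 0 < j := by
      by_contra h
      have e : j = 0 := by omega
      rw [e] at hc
      exact ha0 (mem_pran.mpr ⟨c, hc⟩)
    refine ⟨hj1, ?_⟩
    have hedge := haedge (j - 1) (by omega)
    have e : j - 1 + 1 = j := by omega
    rw [e] at hedge
    exact hsinj.2 hc hedge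
  have hstep : ∀ i b, i < k → (v i, b) ∈ t → b = v ((i + 1) % k) := by
    intro i b hi hb
    rcases hb with hb | ⟨i', hi', heq⟩
    · have hiD : v i ∈ D := hdomD (mem_pdom.mpr ⟨b, hb⟩)
      have him : i < m₀ := by
        by_contra h
        exact hvnotD i (by omega) hi hiD
      rw [hvL i him] at hb
      obtain ⟨h1, h2⟩ := hrigid_out i b him hb
      have e : (i + 1) % k = i + 1 := Nat.mod_eq_of_lt (by omega)
      rw [e, hvL (i + 1) h1]
      exact h2
    · have hi'k : i' < k := hi'
      have e1 : v i' = v i := congrArg Prod.fst heq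
      have e2 : v ((i' + 1) % k) = b := congrArg Prod.snd heq
      have : i' = i := hvinj i' i hi'k hi e1
      rw [← e2, this]
  have hstep' : ∀ j c, j < k → (c, v j) ∈ t → c = v ((j + (k - 1)) % k) := by
    intro j c hj hc
    rcases hc with hc | ⟨i', hi', heq⟩
    · have hjD : v j ∈ D := hranD (mem_pran.mpr ⟨c, hc⟩)
      have hjm : j < m₀ := by
        by_contra h
        exact hvnotD j (by omega) hj hjD
      rw [hvL j hjm] at hc
      obtain ⟨h1, h2⟩ := hrigid_in j c hjm hc
      have e : (j + (k - 1)) % k = j - 1 := by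
        have e1 : j + (k - 1) = (j - 1) + k := by omega
        rw [e1, Nat.add_mod_right]
        exact Nat.mod_eq_of_lt (by omega)
      rw [e, hvL (j - 1) (by omega)]
      exact h2
    · have hi'k : i' < k := hi'
      have e1 : v i' = c := congrArg Prod.fst heq
      have e2 : v ((i' + 1) % k) = v j := congrArg Prod.snd heq
      have hmod : (i' + 1) % k < k := Nat.mod_lt _ (by omega)
      have hij : (i' + 1) % k = j := hvinj _ _ hmod hj e2
      have e3 : (j + (k - 1)) % k = i' := by
        rw [← hij, Nat.mod_add_mod]
        have e4 : i' + 1 + (k - 1) = i' + k := by omega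
        rw [e4, Nat.add_mod_right]
        exact Nat.mod_eq_of_lt hi'k
      rw [e3]
      exact e1.symm
  have hoffC : ∀ x y, (x, y) ∈ t → x ∉ C → ((x, y) ∈ s ∧ y ∉ C) := by
    intro x y hxy hx
    rcases hxy with hxy | ⟨i', hi', heq⟩
    · refine ⟨hxy, ?_⟩
      rintro ⟨j, hj, rfl⟩
      have hjD : v j ∈ D := hranD (mem_pran.mpr ⟨x, hxy⟩)
      have hjm : j < m₀ := by
        by_contra h
        exact hvnotD j (by omega) hj hjD
      rw [hvL j hjm] at hxy
      obtain ⟨h1, h2⟩ := hrigid_in j x hjm hxy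
      refine hx ⟨j - 1, Set.mem_Iio.mpr (by omega), ?_⟩
      rw [hvL (j - 1) (by omega)]
      exact h2.symm
    · exact absurd ⟨i', hi', congrArg Prod.fst heq⟩ hx
  have hoffC' : ∀ x y, (x, y) ∈ t → y ∉ C → ((x, y) ∈ s ∧ x ∉ C) := by
    intro x y hxy hy
    rcases hxy with hxy | ⟨i', hi', heq⟩
    · refine ⟨hxy, ?_⟩
      rintro ⟨i, hi, rfl⟩
      have hiD : v i ∈ D := hdomD (mem_pdom.mpr ⟨y, hxy⟩)
      have him : i < m₀ := by
        by_contra h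
        exact hvnotD i (by omega) hi hiD
      rw [hvL i him] at hxy
      obtain ⟨h1, h2⟩ := hrigid_out i y him hxy
      refine hy ⟨i + 1, Set.mem_Iio.mpr (by omega), ?_⟩
      rw [hvL (i + 1) h1]
      exact h2.symm
    · refine absurd ⟨(i' + 1) % k, Nat.mod_lt _ (by omega), congrArg Prod.snd heq⟩ hy
  have hfieldP : ∀ x y, (x, y) ∈ t → x ∈ D ∪ C ∧ y ∈ D ∪ C := by
    intro x y hxy
    rcases hxy with hxy | ⟨i', hi', heq⟩
    · exact ⟨Or.inl (hdomD (mem_pdom.mpr ⟨y, hxy⟩)),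
        Or.inl (hranD (mem_pran.mpr ⟨x, hxy⟩))⟩
    · have hi'k : i' < k := hi'
      constructor
      · exact Or.inr ⟨i', hi'k, congrArg Prod.fst heq⟩
      · exact Or.inr ⟨(i' + 1) % k, Nat.mod_lt _ (by omega), congrArg Prod.snd heq⟩
  have hg1 : ∀ g ∈ Γ, ∀ c, c ∈ D ∪ C → (g : Perm') c ∈ D ∪ C → c ∈ D ∧ (g : Perm') c ∈ D := by
    intro g hg c hc hgc
    have hcD : c ∈ D := by
      rcases hc with hc | ⟨i, hik, rfl⟩
      · exact hc
      · by_cases him : i < m₀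
        · exact hvD i him
        · exfalso
          have hik2 : i < k := hik
          have hfr : v i = f (i - m₀) := hvB i (by omega)
          have h3 := hf3 g hg (i - m₀) (by omega)
          rcases hgc with hgc | ⟨j, hjk, hj⟩
          · rw [hfr] at hgc
            exact h3.1 hgc
          · have hjk' : j < k := hjk
            by_cases hjm : j < m₀
            · rw [hfr] at hj
              exact h3.1 (hj ▸ hvD j hjm)
            · have hfr2 : v j = f (j - m₀) := hvB j (by omega)
              rw [hfr, hfr2] at hj
              exact h3.2.1 (j - m₀) (by omega) hj.symm
    refine ⟨hcD, ?_⟩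
    rcases hgc with hgc | ⟨j, hjk, hj⟩
    · exact hgc
    · have hjk' : j < k := hjk
      by_cases hjm : j < m₀
      · rw [← hj]; exact hvD j hjm
      · exfalso
        have hfr2 : v j = f (j - m₀) := hvB j (by omega)
        exact (hf3 g hg (j - m₀) (by omega)).2.2 c hcD (hj.symm.trans hfr2)

  -- run lemmas
  have hrunF : ∀ q i b, i < k → wordRel t (Fw q) (v i) b → b = v ((i + q) % k) := by
    intro q
    induction q with
    | zero =>
      intro i b hi hb
      have hb' : v i = b := hb
      have e : (i + 0) % k = i := by rw [Nat.add_zero]; exact Nat.mod_eq_of_lt hi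
      rw [e]
      exact hb'.symm
    | succ q ih =>
      intro i b hi hb
      rw [wordRel_Fw_succ] at hb
      obtain ⟨c, h1, h2⟩ := hb
      have hc := ih i c hi h1
      subst hc
      have hmod : (i + q) % k < k := Nat.mod_lt _ (by omega)
      have := hstep _ b hmod h2
      rw [this, Nat.mod_add_mod]
      congr 1
  have hrunB : ∀ q j b, j < k → wordRel t (Bw q) (v j) b →
      ∃ i, i < k ∧ b = v i ∧ (i + q) % k = j := by
    intro q
    induction q with
    | zero =>
      intro j b hj hb
      have : v j = b := hb
      exact ⟨j, hj, this.symm, by rw [Nat.add_zero]; exact Nat.mod_eq_of_lt hj⟩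
    | succ q ih =>
      intro j b hj hb
      rw [wordRel_Bw_succ] at hb
      obtain ⟨c, h1, h2⟩ := hb
      obtain ⟨i', hi'k, rfl, hij⟩ := ih j c hj h1
      have hb' := hstep' i' b hi'k h2
      refine ⟨(i' + (k - 1)) % k, Nat.mod_lt _ (by omega), hb', ?_⟩
      rw [Nat.mod_add_mod]
      have e : i' + (k - 1) + (q + 1) = (i' + q) + k := by omega
      rw [e, Nat.add_mod_right]
      exact hij
  have hrunOffF : ∀ q x y, x ∉ C → wordRel t (Fw q) x y →
      wordRel s (Fw q) x y ∧ y ∉ C := by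
    intro q
    induction q with
    | zero =>
      intro x y hx hy
      have : x = y := hy
      subst this
      exact ⟨rfl, hx⟩
    | succ q ih =>
      intro x y hx hy
      rw [wordRel_Fw_succ] at hy
      obtain ⟨c, h1, h2⟩ := hy
      obtain ⟨hs1, hc⟩ := ih x c hx h1
      obtain ⟨hs2, hy2⟩ := hoffC c y h2 hc
      exact ⟨(wordRel_Fw_succ s q x y).mpr ⟨c, hs1, hs2⟩, hy2⟩
  have hrunOffB : ∀ q x y, x ∉ C → wordRel t (Bw q) x y →
      wordRel s (Bw q) x y ∧ y ∉ C := by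
    intro q
    induction q with
    | zero =>
      intro x y hx hy
      have : x = y := hy
      subst this
      exact ⟨rfl, hx⟩
    | succ q ih =>
      intro x y hx hy
      rw [wordRel_Bw_succ] at hy
      obtain ⟨c, h1, h2⟩ := hy
      obtain ⟨hs1, hc⟩ := ih x c hx h1
      obtain ⟨hs2, hy2⟩ := hoffC' y c h2 hc
      exact ⟨(wordRel_Bw_succ s q x y).mpr ⟨c, hs1, hs2⟩, hy2⟩
  have hLrun : ∀ q i, i + q < m₀ → wordRel s (Fw q) (v i) (v (i + q)) := by
    intro q
    induction q with
    | zero =>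
      intro i hi
      show v i = v (i + 0)
      congr 1
    | succ q ih =>
      intro i hi
      rw [wordRel_Fw_succ]
      refine ⟨v (i + q), ih i (by omega), ?_⟩
      show (v (i + q), v (i + q + 1)) ∈ s
      rw [hvL (i + q) (by omega), hvL (i + q + 1) (by omega)]
      exact haedge (i + q) (by omega)
  have hstuckX : ∀ kz : ℤ, kz ≠ 0 → ∀ x y, wordRel t (xpow kz) x y →
      x ∈ D ∪ C ∧ y ∈ D ∪ C := by
    intro kz hkz x y hxy
    by_cases hkp : 0 ≤ kz
    · rw [xpow_of_nonneg hkp] at hxy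
      have hq : 0 < kz.toNat := by omega
      obtain ⟨hx, hy⟩ := wordRel_Fw_mem hq hxy
      obtain ⟨x', hx'⟩ := mem_pdom.mp hx
      obtain ⟨y', hy'⟩ := mem_pran.mp hy
      exact ⟨(hfieldP x x' hx').1, (hfieldP y' y hy').2⟩
    · rw [xpow_of_neg hkp] at hxy
      have hq : 0 < (-kz).toNat := by omega
      obtain ⟨hx, hy⟩ := wordRel_Bw_mem hq hxy
      obtain ⟨x', hx'⟩ := mem_pran.mp hx
      obtain ⟨y', hy'⟩ := mem_pdom.mp hy
      exact ⟨(hfieldP x' x hx').2, (hfieldP y y' hy').1⟩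
  -- the block analysis
  have hblock : ∀ (g : Perm') (kz : ℤ), g ∈ Γ → kz ≠ 0 → kz.natAbs ≤ M →
      ∀ x y, x ∈ D → wordRel t (Sum.inl g :: xpow kz) x y →
        (wordRel s (Sum.inl g :: xpow kz) x y ∨ y ∉ D ∪ C) := by
    intro g kz hg hkz hkM x y hx hxy
    obtain ⟨d, hrun, hgd⟩ := hxy
    have hgd' : (g : Perm') d = y := hgd
    by_cases hxC : x ∈ C
    · obtain ⟨i, hik, hvi⟩ := hxC
      have hik' : i < k := hik
      have him : i < m₀ := by
        by_contra h
        exact hvnotD i (by omega) hik' (hvi ▸ hx)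
      by_cases hkp : 0 ≤ kz
      · set q := kz.toNat with hqdef
        have hq : 0 < q := by omega
        have hqM : q ≤ M := by omega
        rw [xpow_of_nonneg hkp] at hrun
        rw [← hvi] at hrun
        have hd := hrunF q i d hik' hrun
        have hiq : i + q < k := by omega
        rw [Nat.mod_eq_of_lt hiq] at hd
        by_cases hdm : i + q < m₀
        · left
          refine ⟨d, ?_, hgd⟩
          rw [xpow_of_nonneg hkp, ← hvi, hd]
          exact hLrun q i hdm
        · right
          intro hyU
          have hdC : d ∈ D ∪ C := Or.inr ⟨i + q, hiq, hd.symm⟩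
          have := (hg1 g hg d hdC (hgd' ▸ hyU)).1
          rw [hd] at this
          exact hvnotD (i + q) (by omega) hiq this
      · set q := (-kz).toNat with hqdef
        have hq : 0 < q := by omega
        have hqM : q ≤ M := by omega
        rw [xpow_of_neg hkp] at hrun
        rw [← hvi] at hrun
        obtain ⟨i', hi'k, rfl, hij⟩ := hrunB q i d hik' hrun
        by_cases hdm : i' < m₀
        · left
          have hlt : i' + q < k := by omega
          have hij' : i' + q = i := by
            rw [Nat.mod_eq_of_lt hlt] at hij
            exact hij
          refine ⟨v i', ?_, hgd⟩
          rw [xpow_of_neg hkp, ← hvi]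
          rw [wordRel_Bw_rev]
          have := hLrun q i' (by omega)
          rw [hij'] at this
          exact this
        · right
          intro hyU
          have hdC : v i' ∈ D ∪ C := Or.inr ⟨i', hi'k, rfl⟩
          have := (hg1 g hg (v i') hdC (hgd' ▸ hyU)).1
          exact hvnotD i' (by omega) hi'k this
    · by_cases hkp : 0 ≤ kz
      · rw [xpow_of_nonneg hkp] at hrun
        obtain ⟨hs1, hdC⟩ := hrunOffF _ x d hxC hrun
        left
        refine ⟨d, ?_, hgd⟩
        rw [xpow_of_nonneg hkp]
        exact hs1
      · rw [xpow_of_neg hkp] at hrun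
        obtain ⟨hs1, hdC⟩ := hrunOffB _ x d hxC hrun
        left
        refine ⟨d, ?_, hgd⟩
        rw [xpow_of_neg hkp]
        exact hs1
  -- shape of the value of a block word
  have hshape : ∀ (σ : Set (ℕ × ℕ)) (bs : List (Perm' × ℤ)), bs ≠ [] →
      (∀ p ∈ bs, p.2 ≠ 0) → ∀ x y, wordRel σ ((bs.map blockWord).flatten) x y →
      ∃ p d, p ∈ bs ∧ (d ∈ pdom σ ∨ d ∈ pran σ) ∧ (p.1 : Perm') d = y := by
    intro σ bs hne hk0 x y hxy
    obtain ⟨p, rest, rfl⟩ := List.exists_cons_of_ne_nil hne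
    rw [List.map_cons, List.flatten_cons, wordRel_append] at hxy
    obtain ⟨c, hc, hpb⟩ := hxy
    obtain ⟨d, hrun, hgd⟩ := hpb
    have hp2 : p.2 ≠ 0 := hk0 p (List.mem_cons_self)
    refine ⟨p, d, List.mem_cons_self, ?_, hgd⟩
    by_cases hkp : 0 ≤ p.2
    · rw [xpow_of_nonneg hkp] at hrun
      exact Or.inr (wordRel_Fw_mem (by omega) hrun).2
    · rw [xpow_of_neg hkp] at hrun
      exact Or.inl (wordRel_Bw_mem (by omega) hrun).2
  -- main word lemma
  have hW2 : ∀ bs : List (Perm' × ℤ), bs ≠ [] →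
      (∀ p ∈ bs, p.1 ∈ Γ ∧ p.2 ≠ 0 ∧ p.2.natAbs ≤ M) →
      ∀ x y, x ∈ D → wordRel t ((bs.map blockWord).flatten) x y →
        wordRel s ((bs.map blockWord).flatten) x y ∨ y ∉ D ∪ C := by
    intro bs
    induction bs with
    | nil => intro h; exact absurd rfl h
    | cons p rest ih =>
      intro _ hprops x y hx hxy
      rw [List.map_cons, List.flatten_cons, wordRel_append] at hxy
      obtain ⟨c, hc, hpb⟩ := hxy
      have hp := hprops p (List.mem_cons_self)
      by_cases hrest : rest = []
      · subst hrest
        simp only [List.map_nil, List.flatten_nil] at hc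
        have hcx : x = c := hc
        subst hcx
        rcases hblock p.1 p.2 hp.1 hp.2.1 hp.2.2 x y hx hpb with hsb | hout
        · left
          rw [List.map_cons, List.flatten_cons, wordRel_append]
          exact ⟨x, rfl, hsb⟩
        · right; exact hout
      · have hih := ih hrest (fun p' hp' => hprops p' (List.mem_cons_of_mem _ hp')) x c hx hc
        rcases hih with hsc | hcout
        · have hcU : c ∈ D ∪ C := by
            obtain ⟨d, hrun, hgd⟩ := hpb
            exact (hstuckX p.2 hp.2.1 c d hrun).1
          have hcD : c ∈ D := by
            obtain ⟨p', d', hp', hd', hgd'⟩ :=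
              hshape s rest hrest (fun p' hp' => (hprops p' (List.mem_cons_of_mem _ hp')).2.1)
                x c hsc
            have hd'D : d' ∈ D := by
              rcases hd' with h | h
              · exact hdomD h
              · exact hranD h
            have hg' := (hprops p' (List.mem_cons_of_mem _ hp')).1
            have := (hg1 p'.1 hg' d' (Or.inl hd'D) (by rw [hgd']; exact hcU)).2
            rw [hgd'] at this
            exact this
          rcases hblock p.1 p.2 hp.1 hp.2.1 hp.2.2 c y hcD hpb with hsb | hout
          · left
            rw [List.map_cons, List.flatten_cons, wordRel_append]
            exact ⟨c, hsc, hsb⟩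
          · right; exact hout
        · exfalso
          obtain ⟨d, hrun, hgd⟩ := hpb
          exact hcout (hstuckX p.2 hp.2.1 c d hrun).1
  -- fixed points are preserved
  have hword : ∀ w ∈ E, wordFix t w ⊆ wordFix s w := by
    intro w hw n₀ hfx
    have hfx' : wordRel t w n₀ n₀ := hfx
    rcases hEnice w hw with ⟨k₀, hk₀, hweq⟩ | ⟨bs, hbs, hmemp, ⟨p₀, hlast, hp₀⟩, hweq⟩
    · -- pure power
      subst hweq
      have hnn : 0 ≤ (k₀ : ℤ) := by positivity
      rw [xpow_of_nonneg hnn] at hfx' ⊢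
      have htn : (k₀ : ℤ).toNat = k₀ := by omega
      rw [htn] at hfx' ⊢
      have hk₀M : k₀ ≤ M := by
        have := hM _ hw
        rw [xpow_of_nonneg hnn] at this
        simp only [Fw, List.length_replicate] at this
        omega
      have hn₀U : n₀ ∈ D ∪ C := by
        obtain ⟨hx, -⟩ := wordRel_Fw_mem hk₀ hfx'
        obtain ⟨x', hx'⟩ := mem_pdom.mp hx
        exact (hfieldP n₀ x' hx').1
      by_cases hn₀C : n₀ ∈ C
      · exfalso
        obtain ⟨i, hik, hvi⟩ := hn₀C
        have hik' : i < k := hik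
        rw [← hvi] at hfx'
        have := hrunF k₀ i (v i) hik' hfx'
        have heqi : (i + k₀) % k = i := (hvinj _ _ (Nat.mod_lt _ (by omega)) hik' this.symm)
        have hdvd : k ∣ k₀ := by
          have h1 : (i + k₀) ≡ (i + 0) [MOD k] := by
            show (i + k₀) % k = (i + 0) % k
            rw [Nat.add_zero, heqi, Nat.mod_eq_of_lt hik']
          have h2 := Nat.ModEq.add_left_cancel' i h1
          exact (Nat.modEq_zero_iff_dvd).mp h2
        have := Nat.le_of_dvd hk₀ hdvd
        omega
      · exact (hrunOffF k₀ n₀ n₀ hn₀C hfx').1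
    · -- block word
      subst hweq
      have hprops : ∀ p ∈ bs, p.1 ∈ Γ ∧ p.2 ≠ 0 ∧ p.2.natAbs ≤ M := by
        intro p hp
        refine ⟨⟨_, hw, inl_mem_flatten hp⟩, (hmemp p hp).2.2, ?_⟩
        exact le_trans (block_natAbs_le hp) (hM _ hw)
      have hn₀U : n₀ ∈ D ∪ C := by
        obtain ⟨bs', hbs'⟩ : ∃ bs', bs = bs' ++ [p₀] :=
          ⟨bs.dropLast, (List.dropLast_append_getLast? p₀ hlast).symm⟩
        rw [hbs', List.map_append, List.flatten_append, wordRel_append] at hfx'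
        obtain ⟨c, hc, -⟩ := hfx'
        simp only [List.map_cons, List.map_nil, List.flatten_cons, List.flatten_nil,
          List.append_nil] at hc
        obtain ⟨d, hrun, -⟩ := hc
        exact (hstuckX p₀.2 (by omega) n₀ d hrun).1
      have hn₀D : n₀ ∈ D := by
        obtain ⟨p, d, hp, hd, hgd⟩ :=
          hshape t bs hbs (fun p hp => (hprops p hp).2.1) n₀ n₀ hfx'
        have hdU : d ∈ D ∪ C := by
          rcases hd with h | h
          · obtain ⟨x', hx'⟩ := mem_pdom.mp h
            exact (hfieldP d x' hx').1
          · obtain ⟨x', hx'⟩ := mem_pran.mp h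
            exact (hfieldP x' d hx').2
        have := (hg1 p.1 (hprops p hp).1 d hdU (by rw [hgd]; exact hn₀U)).2
        rw [hgd] at this
        exact this
      rcases hW2 bs hbs hprops n₀ n₀ hn₀D hfx' with h | h
      · exact h
      · exact absurd (Or.inl hn₀D) h
  -- the new condition is a partial injection
  have htinj : PartInj t := by
    constructor
    · rintro x y y' (h1 | ⟨i, hik, he⟩) (h2 | ⟨j, hjk, he'⟩)
      · exact hsinj.1 h1 h2
      · have hik' : (j : ℕ) < k := hjk
        have e1 : v j = x := congrArg Prod.fst he'
        have e2 : v ((j + 1) % k) = y' := congrArg Prod.snd he'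
        rw [← e1] at h1
        have := hstep j y hik' (hsub h1)
        rw [this, e2]
      · have hik' : (i : ℕ) < k := hik
        have e1 : v i = x := congrArg Prod.fst he
        have e2 : v ((i + 1) % k) = y := congrArg Prod.snd he
        rw [← e1] at h2
        have := hstep i y' hik' (hsub h2)
        rw [← e2]
        exact this.symm
      · have e1 : v i = x := congrArg Prod.fst he
        have e2 : v j = x := congrArg Prod.fst he'
        have : i = j := hvinj i j hik hjk (e1.trans e2.symm)
        subst this
        have e3 : v ((i + 1) % k) = y := congrArg Prod.snd he
        have e4 : v ((i + 1) % k) = y' := congrArg Prod.snd he'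
        rw [← e3, e4]
    · rintro x x' y (h1 | ⟨i, hik, he⟩) (h2 | ⟨j, hjk, he'⟩)
      · exact hsinj.2 h1 h2
      · have hjk' : (j : ℕ) < k := hjk
        have e2 : v ((j + 1) % k) = y := congrArg Prod.snd he'
        rw [← e2] at h1
        have := hstep' _ x (Nat.mod_lt _ (by omega)) (hsub h1)
        have e1 : v j = x' := congrArg Prod.fst he'
        rw [this, ← e1]
        congr 1
        rw [Nat.mod_add_mod]
        have e : j + 1 + (k - 1) = j + k := by omega
        rw [e, Nat.add_mod_right]
        exact Nat.mod_eq_of_lt hjk'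
      · have hik' : (i : ℕ) < k := hik
        have e2 : v ((i + 1) % k) = y := congrArg Prod.snd he
        rw [← e2] at h2
        have := hstep' _ x' (Nat.mod_lt _ (by omega)) (hsub h2)
        have e1 : v i = x := congrArg Prod.fst he
        rw [this, ← e1]
        congr 1
        rw [Nat.mod_add_mod]
        have e : i + 1 + (k - 1) = i + k := by omega
        rw [e, Nat.add_mod_right]
        exact (Nat.mod_eq_of_lt hik').symm
      · have e2 : v ((i + 1) % k) = y := congrArg Prod.snd he
        have e4 : v ((j + 1) % k) = y := congrArg Prod.snd he'
        have : (i + 1) % k = (j + 1) % k :=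
          hvinj _ _ (Nat.mod_lt _ (by omega)) (Nat.mod_lt _ (by omega)) (e2.trans e4.symm)
        have hij : i = j := by
          have hik' : (i : ℕ) < k := hik
          have hjk' : (j : ℕ) < k := hjk
          rcases Nat.lt_or_ge (i + 1) k with h | h
          · rcases Nat.lt_or_ge (j + 1) k with h' | h'
            · rw [Nat.mod_eq_of_lt h, Nat.mod_eq_of_lt h'] at this
              omega
            · have ej : j + 1 = k := by omega
              rw [Nat.mod_eq_of_lt h, ej, Nat.mod_self] at this
              omega
          · have ei : i + 1 = k := by omega
            rcases Nat.lt_or_ge (j + 1) k with h' | h'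
            · rw [ei, Nat.mod_self, Nat.mod_eq_of_lt h'] at this
              omega
            · omega
        subst hij
        have e1 : v i = x := congrArg Prod.fst he
        have e3 : v i = x' := congrArg Prod.fst he'
        rw [← e1, e3]
  have htfin : t.Finite := hsfin.union ((Set.finite_Iio k).image _)
  -- the orbit of n is the cycle C
  have hnC : n ∈ C := ⟨i₀, Set.mem_Iio.mpr (by omega), by rw [hvL i₀ hi₀]; exact hai₀⟩
  have hCclosed : RelClosed (sRel t) C := by
    intro x y hxy
    constructor
    · rintro ⟨i, hik, rfl⟩
      have := hstep i y hik hxy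
      exact this ▸ ⟨(i + 1) % k, Nat.mod_lt _ (by omega), rfl⟩
    · rintro ⟨j, hjk, rfl⟩
      have := hstep' j x hjk hxy
      exact this ▸ ⟨(j + (k - 1)) % k, Nat.mod_lt _ (by omega), rfl⟩
  have horb : relOrbit (sRel t) n = C := by
    apply le_antisymm
    · exact relOrbit_subset hnC hCclosed
    · rintro c ⟨i, hik, rfl⟩
      have hreach : ∀ j, v ((i₀ + j) % k) ∈ relOrbit (sRel t) n := by
        intro j
        induction j with
        | zero =>
          have e : (i₀ + 0) % k = i₀ := Nat.mod_eq_of_lt (by omega)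
          rw [e, hvL i₀ hi₀, hai₀]
          exact mem_relOrbit_self _ n
        | succ j ih =>
          have hm : (i₀ + j) % k < k := Nat.mod_lt _ (by omega)
          have hedge := hnew _ hm
          have := (relClosed_relOrbit (sRel t) n _ _ hedge).mp ih
          rw [Nat.mod_add_mod] at this
          have e : i₀ + j + 1 = i₀ + (j + 1) := by omega
          rw [e] at this
          exact this
      have := hreach (k - i₀ + i)
      have e : (i₀ + (k - i₀ + i)) % k = i := by
        have e1 : i₀ + (k - i₀ + i) = i + k := by omega
        rw [e1, Nat.add_mod_right]
        exact Nat.mod_eq_of_lt hik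
      rw [e] at this
      exact this
  have hCcard : C.ncard = k := by
    have hCeq : C = ↑((Finset.range k).image v) := by
      rw [Finset.coe_image, Finset.coe_range]
    rw [hCeq, Set.ncard_coe_finset]
    rw [Finset.card_image_of_injOn]
    · exact Finset.card_range k
    · intro i hi j hj hij
      exact hvinj i j (Finset.mem_range.mp hi) (Finset.mem_range.mp hj) hij
  refine ⟨t, ⟨htfin, htinj, hEfin, hEnice⟩, ⟨hsub, Set.Subset.rfl, ?_⟩, ?_, ?_⟩
  · intro w hw
    exact Set.Subset.antisymm (hword w hw)
      (fun n₀ h => wordRel_mono hsub w n₀ n₀ h)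
  · refine ⟨⟨n, rfl⟩, ?_⟩
    rw [horb]
    rintro c ⟨i, hik, rfl⟩
    have hik' : (i : ℕ) < k := hik
    constructor
    · exact ⟨v ((i + 1) % k), hnew i hik'⟩
    · have hm : (i + (k - 1)) % k < k := Nat.mod_lt _ (by omega)
      have hedge := hnew _ hm
      have e : ((i + (k - 1)) % k + 1) % k = i := by
        rw [Nat.mod_add_mod]
        have e1 : i + (k - 1) + 1 = i + k := by omega
        rw [e1, Nat.add_mod_right]
        exact Nat.mod_eq_of_lt hik'
      rw [e] at hedge
      exact ⟨v ((i + (k - 1)) % k), hedge⟩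
  · rw [horb]
    exact hCcard

end
end
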